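/- arXiv:1010.5286 — 3 statements merged into one kernel-verified Lean document; each statement's English description precedes it below -/
import Mathlib

section
/- Let Ω = M × (−h,0) with M = (0,1)². Let τ be a smooth solution on [0, T] of ∂_t τ + v·∇_H τ + w ∂_z τ − (1/R₃) ∂_{zz} τ = g with g ≤ 0 pointwise, where the velocity field (v, w) is divergence free (∇_H·v + ∂_z w = 0), periodic horizontally, with w = 0 at z = 0 and z = −h, and τ satisfies τ(z=0) = τ(z=−h) ≤ 0 and τ(·, 0) ≤ 0. Then τ(·, t) ≤ 0 for all t ∈ [0, T]. -/
open MeasureTheory Real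

noncomputable section

/-- Smoothness of a function of four real variables (time and space). -/
def Smooth4 (f : ℝ → ℝ → ℝ → ℝ → ℝ) : Prop :=
  ContDiff ℝ (⊤ : ℕ∞) (fun p : ℝ × ℝ × ℝ × ℝ => f p.1 p.2.1 p.2.2.1 p.2.2.2)

/-- Horizontal periodicity (period 1 in `x` and `y`) for all times. -/
def Per4 (f : ℝ → ℝ → ℝ → ℝ → ℝ) : Prop :=
  ∀ t x y z : ℝ, f t (x + 1) y z = f t x y z ∧ f t x (y + 1) z = f t x y z

/-- Time derivative. -/
def dT (f : ℝ → ℝ → ℝ → ℝ → ℝ) (t x y z : ℝ) : ℝ := deriv (fun s => f s x y z) t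

/-- Partial derivative in `x`. -/
def dX4 (f : ℝ → ℝ → ℝ → ℝ → ℝ) (t x y z : ℝ) : ℝ := deriv (fun s => f t s y z) x

/-- Partial derivative in `y`. -/
def dY4 (f : ℝ → ℝ → ℝ → ℝ → ℝ) (t x y z : ℝ) : ℝ := deriv (fun s => f t x s z) y

/-- Partial derivative in `z`. -/
def dZ4 (f : ℝ → ℝ → ℝ → ℝ → ℝ) (t x y z : ℝ) : ℝ := deriv (fun s => f t x y s) z

section Helpers

open Filter Set Topology

lemma deriv_nonneg_of_max_left {f : ℝ → ℝ} {t₀ : ℝ} (ht : 0 < t₀)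
    (hd : DifferentiableAt ℝ f t₀) (hmax : ∀ s ∈ Set.Icc (0:ℝ) t₀, f s ≤ f t₀) :
    0 ≤ deriv f t₀ := by
  have hder : Tendsto (slope f t₀) (𝓝[≠] t₀) (𝓝 (deriv f t₀)) :=
    hasDerivAt_iff_tendsto_slope.1 hd.hasDerivAt
  have hder' : Tendsto (slope f t₀) (𝓝[<] t₀) (𝓝 (deriv f t₀)) :=
    hder.mono_left (nhdsWithin_mono _ (fun s hs => ne_of_lt hs))
  refine ge_of_tendsto hder' ?_
  have h1 : Set.Ioo (0:ℝ) t₀ ∈ 𝓝[<] t₀ := Ioo_mem_nhdsLT_of_mem ⟨ht, le_rfl⟩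
  filter_upwards [h1] with s hs
  have h2 : f s - f t₀ ≤ 0 := sub_nonpos.2 (hmax s ⟨hs.1.le, hs.2.le⟩)
  have h3 : s - t₀ ≤ 0 := sub_nonpos.2 hs.2.le
  have : slope f t₀ s = (f s - f t₀) / (s - t₀) := slope_def_field f t₀ s
  rw [this]
  exact div_nonneg_iff.2 (Or.inr ⟨h2, h3⟩)

lemma deriv2_nonpos_of_isLocalMax {f : ℝ → ℝ} {z₀ : ℝ} (hf : ContDiff ℝ (⊤:ℕ∞) f)
    (hmax : IsLocalMax f z₀) : deriv (deriv f) z₀ ≤ 0 := by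
  by_contra hpos
  push_neg at hpos
  have h1 : deriv f z₀ = 0 := hmax.deriv_eq_zero
  have hd2 : DifferentiableAt ℝ (deriv f) z₀ :=
    ((hf.iterate_deriv 1).differentiable (by simp)).differentiableAt
  have hslope : Tendsto (slope (deriv f) z₀) (𝓝[≠] z₀) (𝓝 (deriv (deriv f) z₀)) :=
    hasDerivAt_iff_tendsto_slope.1 hd2.hasDerivAt
  have hslope' : ∀ᶠ z in 𝓝[>] z₀, 0 < slope (deriv f) z₀ z :=
    (hslope.mono_left (nhdsWithin_mono _ (fun s hs => ne_of_gt hs))).eventually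
      (eventually_gt_nhds hpos)
  have hpos' : ∀ᶠ z in 𝓝[>] z₀, 0 < deriv f z := by
    filter_upwards [hslope', self_mem_nhdsWithin] with z hz hz'
    have heq : slope (deriv f) z₀ z = (deriv f z - 0) / (z - z₀) := by
      rw [slope_def_field, h1]
    rw [heq] at hz
    have hzz : (0:ℝ) < z - z₀ := sub_pos.2 hz'
    rcases div_pos_iff.1 hz with ⟨h, _⟩ | ⟨_, h⟩
    · linarith
    · linarith
  have hle : ∀ᶠ z in 𝓝[>] z₀, f z ≤ f z₀ := hmax.filter_mono nhdsWithin_le_nhds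
  obtain ⟨u, hu, hsub⟩ := mem_nhdsGT_iff_exists_Ioo_subset.1 ((hpos'.and hle))
  set b := (z₀ + u) / 2 with hb
  have hzb : z₀ < b := by simp only [hb]; linarith [hu.out]
  have hbu : b < u := by simp only [hb]; linarith [hu.out]
  have hmono : StrictMonoOn f (Set.Icc z₀ b) := by
    apply strictMonoOn_of_deriv_pos (convex_Icc _ _) (hf.continuous.continuousOn)
    intro z hz
    rw [interior_Icc] at hz
    exact (hsub ⟨hz.1, hz.2.trans hbu⟩).1
  have hlt : f z₀ < f b := hmono (Set.left_mem_Icc.2 hzb.le) (Set.right_mem_Icc.2 hzb.le) hzb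
  exact absurd (hsub ⟨hzb, hbu⟩).2 (not_le.2 hlt)

lemma periodic_fract_eq {f : ℝ → ℝ} (hf : ∀ x, f (x + 1) = f x) (x : ℝ) :
    f x = f (Int.fract x) := by
  have hp : Function.Periodic f 1 := hf
  have := hp.sub_int_mul_eq (x := x) ⌊x⌋
  rw [Int.fract]
  simpa using this.symm

end Helpers

/-- Maximum principle for advection with only vertical diffusion on
`Ω = (0,1)² × (−h,0)`: if `∂_t τ + v·∇_H τ + w ∂_z τ − (1/R₃) ∂_{zz} τ = g ≤ 0`, the
velocity is divergence free with `w = 0` at `z = 0, −h`, and `τ ≤ 0` on the top and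
bottom boundaries and initially, then `τ ≤ 0` on `[0, T]`. -/
theorem vertical_diffusion_maximum_principle
    (h R₃ T : ℝ) (hh : 0 < h) (hR : 0 < R₃) (hT : 0 < T)
    (τ v₁ v₂ w g : ℝ → ℝ → ℝ → ℝ → ℝ)
    (hτ : Smooth4 τ) (hv₁ : Smooth4 v₁) (hv₂ : Smooth4 v₂) (hw : Smooth4 w)
    (hg : Smooth4 g)
    (hpτ : Per4 τ) (hpv₁ : Per4 v₁) (hpv₂ : Per4 v₂) (hpw : Per4 w) (hpg : Per4 g)
    (hgle : ∀ t x y z : ℝ, g t x y z ≤ 0)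
    (hdiv : ∀ t x y z : ℝ, dX4 v₁ t x y z + dY4 v₂ t x y z + dZ4 w t x y z = 0)
    (hwtop : ∀ t x y : ℝ, w t x y 0 = 0)
    (hwbot : ∀ t x y : ℝ, w t x y (-h) = 0)
    (hpde : ∀ t ∈ Set.Icc (0:ℝ) T, ∀ x y : ℝ, ∀ z ∈ Set.Icc (-h) (0:ℝ),
      dT τ t x y z + v₁ t x y z * dX4 τ t x y z + v₂ t x y z * dY4 τ t x y z
        + w t x y z * dZ4 τ t x y z - (1 / R₃) * dZ4 (dZ4 τ) t x y z = g t x y z)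
    (hbtop : ∀ t ∈ Set.Icc (0:ℝ) T, ∀ x y : ℝ, τ t x y 0 ≤ 0)
    (hbbot : ∀ t ∈ Set.Icc (0:ℝ) T, ∀ x y : ℝ, τ t x y (-h) ≤ 0)
    (hbeq : ∀ t ∈ Set.Icc (0:ℝ) T, ∀ x y : ℝ, τ t x y 0 = τ t x y (-h))
    (hinit : ∀ x y : ℝ, ∀ z ∈ Set.Icc (-h) (0:ℝ), τ 0 x y z ≤ 0) :
    ∀ t ∈ Set.Icc (0:ℝ) T, ∀ x y : ℝ, ∀ z ∈ Set.Icc (-h) (0:ℝ),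
      τ t x y z ≤ 0 := by
  have hτ' : ContDiff ℝ (⊤ : ℕ∞) (fun p : ℝ × ℝ × ℝ × ℝ => τ p.1 p.2.1 p.2.2.1 p.2.2.2) := hτ
  -- Step 1: for every ε > 0, τ ≤ ε t on the closed fundamental domain.
  have key : ∀ ε : ℝ, 0 < ε → ∀ t ∈ Set.Icc (0:ℝ) T, ∀ x ∈ Set.Icc (0:ℝ) 1,
      ∀ y ∈ Set.Icc (0:ℝ) 1, ∀ z ∈ Set.Icc (-h) (0:ℝ), τ t x y z ≤ ε * t := by
    intro ε hε
    set F : ℝ × ℝ × ℝ × ℝ → ℝ := fun p => τ p.1 p.2.1 p.2.2.1 p.2.2.2 - ε * p.1 with hF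
    set K : Set (ℝ × ℝ × ℝ × ℝ) :=
      Set.Icc 0 T ×ˢ Set.Icc 0 1 ×ˢ Set.Icc 0 1 ×ˢ Set.Icc (-h) 0 with hK
    have hKc : IsCompact K :=
      isCompact_Icc.prod (isCompact_Icc.prod (isCompact_Icc.prod isCompact_Icc))
    have hKne : K.Nonempty :=
      ⟨(0, 0, 0, 0), ⟨⟨le_rfl, hT.le⟩, ⟨le_rfl, zero_le_one⟩, ⟨le_rfl, zero_le_one⟩,
        ⟨neg_nonpos.2 hh.le, le_rfl⟩⟩⟩
    have hFc : ContinuousOn F K :=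
      (hτ'.continuous.sub (continuous_const.mul continuous_fst)).continuousOn
    obtain ⟨p₀, hp₀K, hp₀max⟩ := hKc.exists_isMaxOn hKne hFc
    obtain ⟨t₀, x₀, y₀, z₀⟩ := p₀
    obtain ⟨ht₀'', hx₀'', hy₀'', hz₀''⟩ := hp₀K
    have ht₀ : t₀ ∈ Set.Icc (0:ℝ) T := ht₀''
    have hx₀ : x₀ ∈ Set.Icc (0:ℝ) 1 := hx₀''
    have hy₀ : y₀ ∈ Set.Icc (0:ℝ) 1 := hy₀''
    have hz₀Icc : z₀ ∈ Set.Icc (-h) (0:ℝ) := hz₀''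
    -- It suffices to show the maximum of F is ≤ 0.
    suffices hmle : F (t₀, x₀, y₀, z₀) ≤ 0 by
      intro t ht x hx y hy z hz
      have hmem : ((t, x, y, z) : ℝ × ℝ × ℝ × ℝ) ∈ K := ⟨ht, hx, hy, hz⟩
      have h1 : τ t x y z - ε * t ≤ τ t₀ x₀ y₀ z₀ - ε * t₀ := hp₀max hmem
      have h2 : τ t₀ x₀ y₀ z₀ - ε * t₀ ≤ 0 := hmle
      linarith
    by_contra h0'
    push_neg at h0'
    have h0 : 0 < τ t₀ x₀ y₀ z₀ - ε * t₀ := h0'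
    -- t₀ > 0
    have ht₀pos : 0 < t₀ := by
      rcases lt_or_eq_of_le ht₀.1 with h' | h'
      · exact h'
      · exfalso
        have hin := hinit x₀ y₀ z₀ hz₀Icc
        rw [← h'] at h0
        nlinarith
    -- z₀ is interior
    have hτp₀ : 0 < τ t₀ x₀ y₀ z₀ := by nlinarith
    have hz₀mem : z₀ ∈ Set.Ioo (-h) (0:ℝ) := by
      constructor
      · rcases lt_or_eq_of_le hz₀Icc.1 with h' | h'
        · exact h'
        · exact absurd (h' ▸ hbbot t₀ ht₀ x₀ y₀ : τ t₀ x₀ y₀ z₀ ≤ 0) (not_le.2 hτp₀)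
      · rcases lt_or_eq_of_le hz₀Icc.2 with h' | h'
        · exact h'
        · exact absurd (h' ▸ hbtop t₀ ht₀ x₀ y₀ : τ t₀ x₀ y₀ z₀ ≤ 0) (not_le.2 hτp₀)
    -- time derivative bound: dT τ ≥ ε
    have hembt : ContDiff ℝ (⊤ : ℕ∞) (fun s : ℝ => ((s, x₀, y₀, z₀) : ℝ × ℝ × ℝ × ℝ)) :=
      contDiff_id.prodMk contDiff_const
    have hftd : Differentiable ℝ (fun s => τ s x₀ y₀ z₀) :=
      (hτ'.comp hembt).differentiable (by simp)
    have hft : HasDerivAt (fun s => τ s x₀ y₀ z₀ - ε * s)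
        (dT τ t₀ x₀ y₀ z₀ - ε) t₀ := by
      have h1 : HasDerivAt (fun s => τ s x₀ y₀ z₀) (dT τ t₀ x₀ y₀ z₀) t₀ :=
        (hftd t₀).hasDerivAt
      have h2 : HasDerivAt (fun s : ℝ => ε * s) ε t₀ := by
        simpa using (hasDerivAt_id t₀).const_mul ε
      exact h1.sub h2
    have hdTge : ε ≤ dT τ t₀ x₀ y₀ z₀ := by
      have hmaxt : ∀ s ∈ Set.Icc (0:ℝ) t₀,
          τ s x₀ y₀ z₀ - ε * s ≤ τ t₀ x₀ y₀ z₀ - ε * t₀ := by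
        intro s hs
        exact hp₀max (⟨⟨hs.1, hs.2.trans ht₀.2⟩, hx₀, hy₀, hz₀Icc⟩ :
          ((s, x₀, y₀, z₀) : ℝ × ℝ × ℝ × ℝ) ∈ K)

      have := deriv_nonneg_of_max_left ht₀pos hft.differentiableAt hmaxt
      rw [hft.deriv] at this
      linarith
    -- x derivative zero
    have hdX : dX4 τ t₀ x₀ y₀ z₀ = 0 := by
      have hmx : ∀ x : ℝ, τ t₀ x y₀ z₀ ≤ τ t₀ x₀ y₀ z₀ := by
        intro x
        have h1 : τ t₀ x y₀ z₀ = τ t₀ (Int.fract x) y₀ z₀ :=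
          periodic_fract_eq (f := fun x' => τ t₀ x' y₀ z₀)
            (fun x' => (hpτ t₀ x' y₀ z₀).1) x
        have hmem : ((t₀, Int.fract x, y₀, z₀) : ℝ × ℝ × ℝ × ℝ) ∈ K :=
          ⟨ht₀, ⟨Int.fract_nonneg x, (Int.fract_lt_one x).le⟩, hy₀, hz₀Icc⟩
        have hcmp : τ t₀ (Int.fract x) y₀ z₀ - ε * t₀ ≤ τ t₀ x₀ y₀ z₀ - ε * t₀ :=
          hp₀max hmem
        rw [h1]
        linarith
      exact (IsLocalMax.deriv_eq_zero (Filter.Eventually.of_forall hmx))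
    -- y derivative zero
    have hdY : dY4 τ t₀ x₀ y₀ z₀ = 0 := by
      have hmy : ∀ y : ℝ, τ t₀ x₀ y z₀ ≤ τ t₀ x₀ y₀ z₀ := by
        intro y
        have h1 : τ t₀ x₀ y z₀ = τ t₀ x₀ (Int.fract y) z₀ :=
          periodic_fract_eq (f := fun y' => τ t₀ x₀ y' z₀)
            (fun y' => (hpτ t₀ x₀ y' z₀).2) y
        have hmem : ((t₀, x₀, Int.fract y, z₀) : ℝ × ℝ × ℝ × ℝ) ∈ K :=
          ⟨ht₀, hx₀, ⟨Int.fract_nonneg y, (Int.fract_lt_one y).le⟩, hz₀Icc⟩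
        have hcmp : τ t₀ x₀ (Int.fract y) z₀ - ε * t₀ ≤ τ t₀ x₀ y₀ z₀ - ε * t₀ :=
          hp₀max hmem
        rw [h1]
        linarith
      exact (IsLocalMax.deriv_eq_zero (Filter.Eventually.of_forall hmy))
    -- z : local max, first derivative zero, second derivative nonpositive
    have hmz : IsLocalMax (fun z => τ t₀ x₀ y₀ z) z₀ := by
      have hnb : Set.Ioo (-h) (0:ℝ) ∈ nhds z₀ := isOpen_Ioo.mem_nhds hz₀mem
      filter_upwards [hnb] with z hz
      have hmem : ((t₀, x₀, y₀, z) : ℝ × ℝ × ℝ × ℝ) ∈ K :=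
        ⟨ht₀, hx₀, hy₀, ⟨hz.1.le, hz.2.le⟩⟩
      have hcmp : τ t₀ x₀ y₀ z - ε * t₀ ≤ τ t₀ x₀ y₀ z₀ - ε * t₀ := hp₀max hmem
      linarith
    have hdZ : dZ4 τ t₀ x₀ y₀ z₀ = 0 := hmz.deriv_eq_zero
    have hembz : ContDiff ℝ (⊤ : ℕ∞) (fun s : ℝ => ((t₀, x₀, y₀, s) : ℝ × ℝ × ℝ × ℝ)) :=
      contDiff_const.prodMk (contDiff_const.prodMk (contDiff_const.prodMk contDiff_id))
    have hfzsmooth : ContDiff ℝ (⊤ : ℕ∞) (fun z => τ t₀ x₀ y₀ z) :=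
      hτ'.comp hembz
    have hdZZ : dZ4 (dZ4 τ) t₀ x₀ y₀ z₀ ≤ 0 :=
      deriv2_nonpos_of_isLocalMax hfzsmooth hmz
    -- plug into the PDE for a contradiction
    have hpde' := hpde t₀ ht₀ x₀ y₀ z₀ hz₀Icc
    rw [hdX, hdY, hdZ] at hpde'
    have hginst := hgle t₀ x₀ y₀ z₀
    have hRpos : (0:ℝ) < 1 / R₃ := by positivity
    nlinarith [mul_nonpos_of_nonneg_of_nonpos hRpos.le hdZZ]
  -- Step 2: conclude by periodicity and letting ε → 0.
  intro t ht x y z hz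
  have hτred : τ t x y z = τ t (Int.fract x) (Int.fract y) z := by
    have e1 : τ t x y z = τ t (Int.fract x) y z :=
      periodic_fract_eq (f := fun x' => τ t x' y z) (fun x' => (hpτ t x' y z).1) x
    have e2 : τ t (Int.fract x) y z = τ t (Int.fract x) (Int.fract y) z :=
      periodic_fract_eq (f := fun y' => τ t (Int.fract x) y' z)
        (fun y' => (hpτ t (Int.fract x) y' z).2) y
    rw [e1, e2]
  have hle : ∀ δ : ℝ, 0 < δ → τ t x y z ≤ 0 + δ := by
    intro δ hδ
    have hε : 0 < δ / T := div_pos hδ hT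
    have h1 := key (δ / T) hε t ht (Int.fract x)
      ⟨Int.fract_nonneg x, (Int.fract_lt_one x).le⟩ (Int.fract y)
      ⟨Int.fract_nonneg y, (Int.fract_lt_one y).le⟩ z hz
    rw [← hτred] at h1
    have h2 : δ / T * t ≤ δ / T * T := mul_le_mul_of_nonneg_left ht.2 hε.le
    rw [div_mul_cancel₀ _ hT.ne'] at h2
    linarith
  linarith [le_of_forall_pos_le_add hle]
end
end

section
/- Let Ω = M × (−h,0) with M = (0,1)². Suppose T solves ∂_t T + v·∇_H T + w ∂_z T − (1/R₃)∂_{zz} T = Q on [0,t] with divergence-free velocity (∇_H·v + ∂_z w = 0, w vanishing at z=0 and z=−h, horizontal periodicity), and Dirichlet data |T| ≤ 1 on z = 0 and z = −h. Then ‖T(t)‖_{L^∞(Ω)} ≤ 1 + ‖T(0)‖_{L^∞(Ω)} + t ‖Q‖_{L^∞(Ω)}. -/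
open MeasureTheory Real

noncomputable section

/-- `L^∞(Ω)` norm over `Ω = (0,1)² × (−h,0)`. -/
def SupN3 (h : ℝ) (f : ℝ → ℝ → ℝ → ℝ) : ℝ :=
  ⨆ p : (Set.Ioo (0:ℝ) 1 ×ˢ Set.Ioo (0:ℝ) 1 ×ˢ Set.Ioo (-h) (0:ℝ) : Set (ℝ × ℝ × ℝ)),
    |f p.1.1 p.1.2.1 p.1.2.2|

open Set Filter Topology in
/-- A periodic function bounded on a period by its value at `x` is globally bounded by it. -/
lemma periodic_max_ext {g : ℝ → ℝ} (hg : ∀ a, g (a + 1) = g a) {x : ℝ}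
    (hx : ∀ a ∈ Set.Icc (0:ℝ) 1, g a ≤ g x) : ∀ a, g a ≤ g x := by
  intro a
  have hper : Function.Periodic g 1 := hg
  have h1 : g (a - (⌊a⌋ : ℝ) * 1) = g a := hper.sub_int_mul_eq ⌊a⌋
  have h2 : g (Int.fract a) = g a := by rwa [mul_one] at h1
  rw [← h2]
  exact hx _ ⟨Int.fract_nonneg a, (Int.fract_lt_one a).le⟩

open Set Filter Topology in
/-- Second derivative test: at a local max of a smooth function the second
derivative is nonpositive. -/
lemma second_deriv_nonpos_of_isLocalMax {g : ℝ → ℝ} (hg : ContDiff ℝ (⊤:ℕ∞) g) {z : ℝ}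
    (hmax : IsLocalMax g z) : deriv (deriv g) z ≤ 0 := by
  by_contra hpos
  push_neg at hpos
  set g' := deriv g with hg'
  have hdg : ContDiff ℝ (⊤:ℕ∞) g' := (contDiff_infty_iff_deriv.mp hg).2
  have hz0 : g' z = 0 := hmax.deriv_eq_zero
  have hD : HasDerivAt g' (deriv g' z) z := (hdg.differentiable (by simp) z).hasDerivAt
  have hslope : Tendsto (slope g' z) (𝓝[≠] z) (𝓝 (deriv g' z)) :=
    hasDerivAt_iff_tendsto_slope.mp hD
  have hev : ∀ᶠ a in 𝓝[≠] z, 0 < slope g' z a :=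
    hslope (isOpen_Ioi.mem_nhds hpos)
  have hev' : ∀ᶠ a in 𝓝[>] z, 0 < slope g' z a :=
    hev.filter_mono (nhdsWithin_mono z (fun a ha => ne_of_gt ha))
  obtain ⟨u, hu, huo⟩ := mem_nhdsGT_iff_exists_Ioo_subset.mp hev'
  obtain ⟨ε, hε, hball⟩ := Metric.eventually_nhds_iff_ball.mp hmax
  set b := z + min (u - z) ε / 2 with hb
  have hmin : 0 < min (u - z) ε := lt_min (by linarith [hu.out]) hε
  have hzb : z < b := by rw [hb]; linarith
  have hbu : b < u := by
    have : min (u - z) ε ≤ u - z := min_le_left _ _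
    simp only [hb]; linarith
  have hbε : |b - z| < ε := by
    have : min (u - z) ε ≤ ε := min_le_right _ _
    rw [abs_of_pos (by linarith : (0:ℝ) < b - z)]
    simp only [hb]; linarith
  have hpos' : ∀ a ∈ interior (Icc z b), 0 < deriv g a := by
    intro a ha
    rw [interior_Icc] at ha
    have haIoo : a ∈ Ioo z u := ⟨ha.1, ha.2.trans hbu⟩
    have hlt : 0 < slope g' z a := huo haIoo
    have hs : slope g' z a = g' a / (a - z) := by
      rw [slope_def_field, hz0, sub_zero]
    rw [hs] at hlt
    have hpa : 0 < g' a := by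
      by_contra hna
      push_neg at hna
      have : g' a / (a - z) ≤ 0 := div_nonpos_of_nonpos_of_nonneg hna (by linarith [ha.1])
      linarith
    exact hpa
  have hmono : StrictMonoOn g (Icc z b) :=
    strictMonoOn_of_deriv_pos (convex_Icc z b) (hg.continuous.continuousOn) hpos'
  have h5 : g z < g b := hmono (left_mem_Icc.mpr hzb.le) (right_mem_Icc.mpr hzb.le) hzb
  have h6 : g b ≤ g z := hball b (by simpa [Metric.mem_ball, Real.dist_eq] using hbε)
  linarith

open Set Filter Topology in
/-- Points of the closed box are bounded (in absolute value) by `SupN3`. -/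
lemma abs_le_supN3 (h : ℝ) (hh : 0 < h) (f : ℝ → ℝ → ℝ → ℝ)
    (hf : Continuous fun p : ℝ × ℝ × ℝ => f p.1 p.2.1 p.2.2) :
    ∀ p : ℝ × ℝ × ℝ, p ∈ (Set.Icc (0:ℝ) 1 ×ˢ Set.Icc (0:ℝ) 1 ×ˢ Set.Icc (-h) (0:ℝ)) →
      |f p.1 p.2.1 p.2.2| ≤ SupN3 h f := by
  set Ω : Set (ℝ × ℝ × ℝ) := Set.Ioo (0:ℝ) 1 ×ˢ Set.Ioo (0:ℝ) 1 ×ˢ Set.Ioo (-h) (0:ℝ) with hΩ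
  set K : Set (ℝ × ℝ × ℝ) := Set.Icc (0:ℝ) 1 ×ˢ Set.Icc (0:ℝ) 1 ×ˢ Set.Icc (-h) (0:ℝ) with hK
  have hcl : closure Ω = K := by
    rw [hΩ, hK, closure_prod_eq, closure_prod_eq, closure_Ioo (by norm_num : (0:ℝ) ≠ 1),
      closure_Ioo (by linarith : (-h:ℝ) ≠ 0)]
  have hKc : IsCompact K := (isCompact_Icc.prod (isCompact_Icc.prod isCompact_Icc))
  set g : ℝ × ℝ × ℝ → ℝ := fun p => |f p.1 p.2.1 p.2.2| with hg
  have hgc : Continuous g := hf.abs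
  have hsub : Ω ⊆ K := by rw [← hcl]; exact subset_closure
  have hbdd : BddAbove (Set.range fun p : Ω => g p) := by
    have h1 : BddAbove (g '' K) := hKc.bddAbove_image hgc.continuousOn
    refine h1.mono ?_
    rintro a ⟨p, rfl⟩
    exact ⟨p, hsub p.2, rfl⟩
  have hle : ∀ q ∈ Ω, g q ≤ SupN3 h f := by
    intro q hq
    exact le_ciSup hbdd ⟨q, hq⟩
  intro p hp
  have hmem : p ∈ closure Ω := by rw [hcl]; exact hp
  have hnb : (𝓝[Ω] p).NeBot := mem_closure_iff_nhdsWithin_neBot.mp hmem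
  have htend : Tendsto g (𝓝[Ω] p) (𝓝 (g p)) :=
    (hgc.continuousAt).continuousWithinAt.tendsto
  exact le_of_tendsto htend (eventually_nhdsWithin_of_forall hle)

open Set Filter Topology in
/-- If `ψ` is differentiable and maximal at `s` over `[0,t]` with `0 < s`, then `0 ≤ deriv ψ s`. -/
lemma deriv_nonneg_of_max {ψ : ℝ → ℝ} {s t : ℝ} (hψ : Differentiable ℝ ψ)
    (hs : 0 < s) (hst : s ≤ t) (hmax : ∀ a ∈ Set.Icc (0:ℝ) t, ψ a ≤ ψ s) :
    0 ≤ deriv ψ s := by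
  have hD : HasDerivAt ψ (deriv ψ s) s := (hψ s).hasDerivAt
  have hslope : Tendsto (slope ψ s) (𝓝[≠] s) (𝓝 (deriv ψ s)) :=
    hasDerivAt_iff_tendsto_slope.mp hD
  have hslope' : Tendsto (slope ψ s) (𝓝[<] s) (𝓝 (deriv ψ s)) :=
    hslope.mono_left (nhdsWithin_mono s (fun a ha => ne_of_lt ha))
  have hev : ∀ᶠ a in 𝓝[<] s, 0 ≤ slope ψ s a := by
    have hIoo : Set.Ioo 0 s ∈ 𝓝[<] s := by
      rw [mem_nhdsLT_iff_exists_Ioo_subset]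
      exact ⟨0, hs, subset_rfl⟩
    filter_upwards [hIoo] with a ha
    have h1 : ψ a - ψ s ≤ 0 := by
      have := hmax a ⟨ha.1.le, ha.2.le.trans hst⟩; linarith
    have h2 : a - s < 0 := by linarith [ha.2]
    rw [slope_def_field]
    have := div_nonneg (neg_nonneg.mpr h1) (neg_nonneg.mpr h2.le)
    rwa [neg_div_neg_eq] at this
  exact ge_of_tendsto hslope' hev

open Set Filter Topology in
/-- One-sided maximum principle for the vertical diffusion–advection operator. -/
lemma aux_max (h R₃ t : ℝ) (hh : 0 < h) (hR : 0 < R₃) (ht : 0 ≤ t)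
    (T v₁ v₂ w : ℝ → ℝ → ℝ → ℝ → ℝ) (Q : ℝ → ℝ → ℝ → ℝ) (M₀ MQ : ℝ)
    (hM₀ : 0 ≤ M₀) (hMQ : 0 ≤ MQ)
    (hT : Smooth4 T) (hpT : Per4 T)
    (hT0 : ∀ x y z : ℝ, x ∈ Set.Icc (0:ℝ) 1 → y ∈ Set.Icc (0:ℝ) 1 →
      z ∈ Set.Icc (-h) (0:ℝ) → T 0 x y z ≤ M₀)
    (hQb : ∀ x y z : ℝ, x ∈ Set.Icc (0:ℝ) 1 → y ∈ Set.Icc (0:ℝ) 1 →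
      z ∈ Set.Icc (-h) (0:ℝ) → Q x y z ≤ MQ)
    (hpde : ∀ s ∈ Set.Icc (0:ℝ) t, ∀ x y : ℝ, ∀ z ∈ Set.Icc (-h) (0:ℝ),
      dT T s x y z + v₁ s x y z * dX4 T s x y z + v₂ s x y z * dY4 T s x y z
        + w s x y z * dZ4 T s x y z - (1 / R₃) * dZ4 (dZ4 T) s x y z = Q x y z)
    (hbtop : ∀ s ∈ Set.Icc (0:ℝ) t, ∀ x y : ℝ, T s x y 0 ≤ 1)
    (hbbot : ∀ s ∈ Set.Icc (0:ℝ) t, ∀ x y : ℝ, T s x y (-h) ≤ 1) :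
    ∀ x ∈ Set.Icc (0:ℝ) 1, ∀ y ∈ Set.Icc (0:ℝ) 1, ∀ z ∈ Set.Icc (-h) (0:ℝ),
      T t x y z ≤ 1 + M₀ + t * MQ := by
  have key : ∀ ε : ℝ, 0 < ε → ∀ x ∈ Set.Icc (0:ℝ) 1, ∀ y ∈ Set.Icc (0:ℝ) 1,
      ∀ z ∈ Set.Icc (-h) (0:ℝ), T t x y z ≤ 1 + M₀ + (MQ + ε) * t := by
    intro ε hε x hx y hy z hz
    set c : ℝ := MQ + ε with hcdef
    have hc : 0 < c := by linarith
    set K4 : Set (ℝ × ℝ × ℝ × ℝ) :=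
      Set.Icc 0 t ×ˢ Set.Icc 0 1 ×ˢ Set.Icc 0 1 ×ˢ Set.Icc (-h) 0 with hK4
    have hK4c : IsCompact K4 :=
      isCompact_Icc.prod (isCompact_Icc.prod (isCompact_Icc.prod isCompact_Icc))
    have hK4ne : K4.Nonempty :=
      ⟨(0, 0, 0, 0), ⟨le_rfl, ht⟩, ⟨le_rfl, zero_le_one⟩, ⟨le_rfl, zero_le_one⟩,
        ⟨neg_nonpos.mpr hh.le, le_rfl⟩⟩
    set F : ℝ × ℝ × ℝ × ℝ → ℝ :=
      fun p => T p.1 p.2.1 p.2.2.1 p.2.2.2 - c * p.1 with hF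
    have hFc : Continuous F := hT.continuous.sub (continuous_const.mul continuous_fst)
    obtain ⟨p₀, hp₀, hmax⟩ := hK4c.exists_isMaxOn hK4ne hFc.continuousOn
    rw [isMaxOn_iff] at hmax
    obtain ⟨s₀, x₀, y₀, z₀⟩ := p₀
    obtain ⟨hs, hx₀, hy₀, hz₀⟩ := hp₀
    dsimp only at hs hx₀ hy₀ hz₀
    -- time-slice smoothness
    have hTt : ContDiff ℝ (⊤:ℕ∞) (fun a => T a x₀ y₀ z₀) :=
      hT.comp (contDiff_id.prodMk (contDiff_const.prodMk (contDiff_const.prodMk contDiff_const)))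
    have hclaim : F (s₀, x₀, y₀, z₀) ≤ 1 + M₀ := by
      rcases eq_or_lt_of_le hs.1 with hs0 | hs0
      · -- initial time
        have h1 : T 0 x₀ y₀ z₀ ≤ M₀ := hT0 x₀ y₀ z₀ hx₀ hy₀ hz₀
        simp only [hF, ← hs0, mul_zero]
        linarith
      · have hcs : 0 ≤ c * s₀ := mul_nonneg hc.le hs.1
        rcases eq_or_lt_of_le hz₀.1 with hzb | hzb
        · -- bottom boundary
          have h1 : T s₀ x₀ y₀ (-h) ≤ 1 := hbbot s₀ hs x₀ y₀
          simp only [hF]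
          rw [← hzb]
          linarith
        · rcases eq_or_lt_of_le hz₀.2 with hzt | hzt
          · -- top boundary
            have h1 : T s₀ x₀ y₀ 0 ≤ 1 := hbtop s₀ hs x₀ y₀
            simp only [hF]
            rw [hzt]
            linarith
          · -- interior maximum: contradiction
            exfalso
            -- horizontal derivatives vanish
            have hdx : dX4 T s₀ x₀ y₀ z₀ = 0 := by
              have hper : ∀ a : ℝ, T s₀ (a + 1) y₀ z₀ = T s₀ a y₀ z₀ :=
                fun a => (hpT s₀ a y₀ z₀).1
              have hmx : ∀ a ∈ Set.Icc (0:ℝ) 1, T s₀ a y₀ z₀ ≤ T s₀ x₀ y₀ z₀ := by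
                intro a ha
                have := hmax (s₀, a, y₀, z₀) ⟨hs, ha, hy₀, hz₀⟩
                simp only [hF] at this
                linarith
              have hall := periodic_max_ext hper hmx
              have hlm : IsLocalMax (fun a => T s₀ a y₀ z₀) x₀ :=
                Filter.Eventually.of_forall hall
              exact hlm.deriv_eq_zero
            have hdy : dY4 T s₀ x₀ y₀ z₀ = 0 := by
              have hper : ∀ a : ℝ, T s₀ x₀ (a + 1) z₀ = T s₀ x₀ a z₀ :=
                fun a => (hpT s₀ x₀ a z₀).2
              have hmx : ∀ a ∈ Set.Icc (0:ℝ) 1, T s₀ x₀ a z₀ ≤ T s₀ x₀ y₀ z₀ := by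
                intro a ha
                have := hmax (s₀, x₀, a, z₀) ⟨hs, hx₀, ha, hz₀⟩
                simp only [hF] at this
                linarith
              have hall := periodic_max_ext hper hmx
              have hlm : IsLocalMax (fun a => T s₀ x₀ a z₀) y₀ :=
                Filter.Eventually.of_forall hall
              exact hlm.deriv_eq_zero
            -- vertical local max
            have hlmz : IsLocalMax (fun a => T s₀ x₀ y₀ a) z₀ := by
              have hIoo : Set.Ioo (-h) 0 ∈ 𝓝 z₀ := isOpen_Ioo.mem_nhds ⟨hzb, hzt⟩
              refine Filter.eventually_of_mem hIoo (fun a ha => ?_)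
              have := hmax (s₀, x₀, y₀, a) ⟨hs, hx₀, hy₀, ⟨ha.1.le, ha.2.le⟩⟩
              simp only [hF] at this
              linarith
            have hdz : dZ4 T s₀ x₀ y₀ z₀ = 0 := hlmz.deriv_eq_zero
            have hTz : ContDiff ℝ (⊤:ℕ∞) (fun a => T s₀ x₀ y₀ a) :=
              hT.comp (contDiff_const.prodMk (contDiff_const.prodMk
                (contDiff_const.prodMk contDiff_id)))
            have hd2 : dZ4 (dZ4 T) s₀ x₀ y₀ z₀ ≤ 0 :=
              second_deriv_nonpos_of_isLocalMax hTz hlmz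
            -- time derivative bound
            have hdt : c ≤ dT T s₀ x₀ y₀ z₀ := by
              set ψ : ℝ → ℝ := fun a => T a x₀ y₀ z₀ - c * a with hψ
              have hψd : Differentiable ℝ ψ :=
                (hTt.differentiable (by simp)).sub
                  (differentiable_id.const_mul c)
              have hmaxψ : ∀ a ∈ Set.Icc (0:ℝ) t, ψ a ≤ ψ s₀ := by
                intro a ha
                have := hmax (a, x₀, y₀, z₀) ⟨ha, hx₀, hy₀, hz₀⟩
                simpa only [hF, hψ] using this
              have h0 := deriv_nonneg_of_max hψd hs0 hs.2 hmaxψ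
              have h1 : HasDerivAt (fun a => T a x₀ y₀ z₀) (dT T s₀ x₀ y₀ z₀) s₀ :=
                ((hTt.differentiable (by simp)) s₀).hasDerivAt
              have h2 : HasDerivAt (fun a : ℝ => c * a) c s₀ := by
                simpa using (hasDerivAt_id s₀).const_mul c
              have h3 : HasDerivAt ψ (dT T s₀ x₀ y₀ z₀ - c) s₀ := h1.sub h2
              rw [h3.deriv] at h0
              linarith
            -- the PDE at the maximum point
            have hpd := hpde s₀ hs x₀ y₀ z₀ hz₀
            rw [hdx, hdy, hdz] at hpd
            have hQle : Q x₀ y₀ z₀ ≤ MQ := hQb x₀ y₀ z₀ hx₀ hy₀ hz₀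
            have hRpos : 0 < 1 / R₃ := by positivity
            have hprod : (1 / R₃) * dZ4 (dZ4 T) s₀ x₀ y₀ z₀ ≤ 0 :=
              mul_nonpos_of_nonneg_of_nonpos hRpos.le hd2
            simp only [mul_zero, add_zero] at hpd
            linarith
    have hptK : (t, x, y, z) ∈ K4 := ⟨⟨ht, le_rfl⟩, hx, hy, hz⟩
    have hfin := hmax (t, x, y, z) hptK
    simp only [hF] at hfin hclaim
    linarith
  intro x hx y hy z hz
  rcases eq_or_lt_of_le ht with ht0 | ht0
  · have := key 1 one_pos x hx y hy z hz
    rw [← ht0] at this ⊢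
    simpa using this
  · refine le_of_forall_pos_le_add (fun ε hε => ?_)
    have := key (ε / t) (by positivity) x hx y hy z hz
    have h1 : (MQ + ε / t) * t = MQ * t + ε := by
      field_simp
    rw [h1] at this
    linarith

lemma dT_neg (f : ℝ → ℝ → ℝ → ℝ → ℝ) (s x y z : ℝ) :
    dT (fun a b c d => -(f a b c d)) s x y z = -(dT f s x y z) := deriv.neg

lemma dX4_neg (f : ℝ → ℝ → ℝ → ℝ → ℝ) (s x y z : ℝ) :
    dX4 (fun a b c d => -(f a b c d)) s x y z = -(dX4 f s x y z) := deriv.neg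

lemma dY4_neg (f : ℝ → ℝ → ℝ → ℝ → ℝ) (s x y z : ℝ) :
    dY4 (fun a b c d => -(f a b c d)) s x y z = -(dY4 f s x y z) := deriv.neg

lemma dZ4_neg (f : ℝ → ℝ → ℝ → ℝ → ℝ) (s x y z : ℝ) :
    dZ4 (fun a b c d => -(f a b c d)) s x y z = -(dZ4 f s x y z) := deriv.neg

lemma dZ4_neg_fun (f : ℝ → ℝ → ℝ → ℝ → ℝ) :
    dZ4 (fun a b c d => -(f a b c d)) = fun s x y z => -(dZ4 f s x y z) := by
  funext s x y z; exact dZ4_neg f s x y z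

lemma dZZ_neg (f : ℝ → ℝ → ℝ → ℝ → ℝ) (s x y z : ℝ) :
    dZ4 (dZ4 (fun a b c d => -(f a b c d))) s x y z = -(dZ4 (dZ4 f) s x y z) := by
  rw [dZ4_neg_fun]
  exact deriv.neg

/-- `L^∞` bound for the temperature: if `T` solves
`∂_t T + v·∇_H T + w ∂_z T − (1/R₃) ∂_{zz} T = Q` on `[0,t]` with divergence-free
velocity and `|T| ≤ 1` on the top and bottom boundaries, then
`‖T(t)‖_∞ ≤ 1 + ‖T(0)‖_∞ + t ‖Q‖_∞`. -/
theorem temperature_Linfty_bound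
    (h R₃ t : ℝ) (hh : 0 < h) (hR : 0 < R₃) (ht : 0 ≤ t)
    (T v₁ v₂ w : ℝ → ℝ → ℝ → ℝ → ℝ) (Q : ℝ → ℝ → ℝ → ℝ)
    (hT : Smooth4 T) (hv₁ : Smooth4 v₁) (hv₂ : Smooth4 v₂) (hw : Smooth4 w)
    (hQ : ContDiff ℝ (⊤ : ℕ∞) (fun p : ℝ × ℝ × ℝ => Q p.1 p.2.1 p.2.2))
    (hpT : Per4 T) (hpv₁ : Per4 v₁) (hpv₂ : Per4 v₂) (hpw : Per4 w)
    (hpQ : ∀ x y z : ℝ, Q (x + 1) y z = Q x y z ∧ Q x (y + 1) z = Q x y z)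
    (hdiv : ∀ s x y z : ℝ, dX4 v₁ s x y z + dY4 v₂ s x y z + dZ4 w s x y z = 0)
    (hwtop : ∀ s x y : ℝ, w s x y 0 = 0)
    (hwbot : ∀ s x y : ℝ, w s x y (-h) = 0)
    (hpde : ∀ s ∈ Set.Icc (0:ℝ) t, ∀ x y : ℝ, ∀ z ∈ Set.Icc (-h) (0:ℝ),
      dT T s x y z + v₁ s x y z * dX4 T s x y z + v₂ s x y z * dY4 T s x y z
        + w s x y z * dZ4 T s x y z - (1 / R₃) * dZ4 (dZ4 T) s x y z = Q x y z)
    (hbtop : ∀ s ∈ Set.Icc (0:ℝ) t, ∀ x y : ℝ, |T s x y 0| ≤ 1)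
    (hbbot : ∀ s ∈ Set.Icc (0:ℝ) t, ∀ x y : ℝ, |T s x y (-h)| ≤ 1) :
    SupN3 h (T t) ≤ 1 + SupN3 h (T 0) + t * SupN3 h Q := by
  have hcont0 : Continuous fun p : ℝ × ℝ × ℝ => T 0 p.1 p.2.1 p.2.2 :=
    hT.continuous.comp (continuous_const.prodMk continuous_id)
  have habs0 := abs_le_supN3 h hh (T 0) hcont0
  have habsQ := abs_le_supN3 h hh Q hQ.continuous
  have hz0mem : (0:ℝ) ∈ Set.Icc (-h) (0:ℝ) := ⟨neg_nonpos.mpr hh.le, le_rfl⟩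
  have h01 : (0:ℝ) ∈ Set.Icc (0:ℝ) 1 := ⟨le_rfl, zero_le_one⟩
  have hM₀ : 0 ≤ SupN3 h (T 0) :=
    le_trans (abs_nonneg _) (habs0 (0, 0, 0) ⟨h01, h01, hz0mem⟩)
  have hMQ : 0 ≤ SupN3 h Q :=
    le_trans (abs_nonneg _) (habsQ (0, 0, 0) ⟨h01, h01, hz0mem⟩)
  -- upper bound for T
  have hup := aux_max h R₃ t hh hR ht T v₁ v₂ w Q (SupN3 h (T 0)) (SupN3 h Q) hM₀ hMQ hT hpT
    (fun x y z hx hy hz =>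
      le_trans (le_abs_self _) (habs0 (x, y, z) ⟨hx, hy, hz⟩))
    (fun x y z hx hy hz =>
      le_trans (le_abs_self _) (habsQ (x, y, z) ⟨hx, hy, hz⟩))
    hpde
    (fun s hs x y => le_trans (le_abs_self _) (hbtop s hs x y))
    (fun s hs x y => le_trans (le_abs_self _) (hbbot s hs x y))
  -- upper bound for -T
  have hneg := aux_max h R₃ t hh hR ht (fun a b c d => -(T a b c d)) v₁ v₂ w
    (fun a b c => -(Q a b c)) (SupN3 h (T 0)) (SupN3 h Q) hM₀ hMQ
    (hT.neg)
    (fun s x y z => ⟨by dsimp only; rw [(hpT s x y z).1], by dsimp only; rw [(hpT s x y z).2]⟩)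
    (fun x y z hx hy hz => by
      exact le_trans (neg_le_abs _) (habs0 (x, y, z) ⟨hx, hy, hz⟩))
    (fun x y z hx hy hz => by
      exact le_trans (neg_le_abs _) (habsQ (x, y, z) ⟨hx, hy, hz⟩))
    (by
      intro s hs x y z hz
      rw [dT_neg, dX4_neg, dY4_neg, dZ4_neg, dZZ_neg]
      linear_combination -(hpde s hs x y z hz))
    (fun s hs x y => by
      have := abs_le.mp (hbtop s hs x y)
      linarith [this.1])
    (fun s hs x y => by
      have := abs_le.mp (hbbot s hs x y)
      linarith [this.1])
  -- conclude
  have hne : Nonempty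
      (Set.Ioo (0:ℝ) 1 ×ˢ Set.Ioo (0:ℝ) 1 ×ˢ Set.Ioo (-h) (0:ℝ) : Set (ℝ × ℝ × ℝ)) :=
    ⟨⟨(1/2, 1/2, -h/2), ⟨by norm_num, by norm_num⟩, ⟨by norm_num, by norm_num⟩,
      ⟨by linarith, by linarith⟩⟩⟩
  refine ciSup_le ?_
  rintro ⟨⟨px, py, pz⟩, hp⟩
  obtain ⟨hpx, hpy, hpz⟩ := hp
  dsimp only at hpx hpy hpz ⊢
  have hx : px ∈ Set.Icc (0:ℝ) 1 := ⟨hpx.1.le, hpx.2.le⟩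
  have hy : py ∈ Set.Icc (0:ℝ) 1 := ⟨hpy.1.le, hpy.2.le⟩
  have hz : pz ∈ Set.Icc (-h) (0:ℝ) := ⟨hpz.1.le, hpz.2.le⟩
  have h1 := hup px hx py hy pz hz
  have h2 := hneg px hx py hy pz hz
  exact abs_le.mpr ⟨by linarith, by linarith⟩
end
end

section
/- Let Ω = M × (−h,0) with M = (0,1)², and let ṽ ∈ H¹(Ω) and v̄ smooth on M. Then ∫_M (∫_{−h}^0 |ṽ|² dz)^4 dxdy)^{1/4} ≤ C ‖ṽ‖_{L⁶(Ω)}^{3/2} (‖∇_H ṽ‖_{L²(Ω)} + ‖ṽ‖_{L²(Ω)})^{1/2}. -/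
open MeasureTheory Real

noncomputable section

/-- Integral over the channel `Ω = (0,1)² × (−h,0)`, written as an iterated integral. -/
def iInt (h : ℝ) (f : ℝ → ℝ → ℝ → ℝ) : ℝ :=
  ∫ x in Set.Ioo (0:ℝ) 1, ∫ y in Set.Ioo (0:ℝ) 1, ∫ z in Set.Ioo (-h) (0:ℝ), f x y z

/-- Smoothness of a function of three real variables. -/
def Smooth3 (f : ℝ → ℝ → ℝ → ℝ) : Prop :=
  ContDiff ℝ (⊤ : ℕ∞) (fun p : ℝ × ℝ × ℝ => f p.1 p.2.1 p.2.2)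

/-- Periodicity in the horizontal variables with period 1. -/
def Per3 (f : ℝ → ℝ → ℝ → ℝ) : Prop :=
  ∀ x y z : ℝ, f (x + 1) y z = f x y z ∧ f x (y + 1) z = f x y z

/-- Horizontal partial derivative in `x`. -/
def dX (f : ℝ → ℝ → ℝ → ℝ) (x y z : ℝ) : ℝ := deriv (fun t => f t y z) x

/-- Horizontal partial derivative in `y`. -/
def dY (f : ℝ → ℝ → ℝ → ℝ) (x y z : ℝ) : ℝ := deriv (fun t => f x t z) y

/-- Vertical partial derivative in `z`. -/
def dZ (f : ℝ → ℝ → ℝ → ℝ) (x y z : ℝ) : ℝ := deriv (fun t => f x y t) z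

/-- `L²(Ω)` norm. -/
def L2n (h : ℝ) (f : ℝ → ℝ → ℝ → ℝ) : ℝ :=
  (iInt h (fun x y z => (f x y z) ^ 2)) ^ ((1:ℝ) / 2)

/-- `L^q(Ω)` norm. -/
def Lqn (h q : ℝ) (f : ℝ → ℝ → ℝ → ℝ) : ℝ :=
  (iInt h (fun x y z => |f x y z| ^ q)) ^ (1 / q)

open Set

lemma ioo_eq_ii {a b : ℝ} (hab : a ≤ b) (f : ℝ → ℝ) :
    ∫ t in Set.Ioo a b, f t = ∫ t in a..b, f t := by
  rw [intervalIntegral.integral_of_le hab, MeasureTheory.integral_Ioc_eq_integral_Ioo]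

lemma contIntegrableOn {f : ℝ → ℝ} (hf : Continuous f) (a b : ℝ) :
    IntegrableOn f (Set.Ioo a b) volume :=
  (hf.integrableOn_Icc).mono_set Set.Ioo_subset_Icc_self

lemma param_cont {X : Type*} [TopologicalSpace X] (f : X → ℝ → ℝ)
    (hf : Continuous ↿f) (a b : ℝ) (hab : a ≤ b) :
    Continuous fun p => ∫ t in Set.Ioo a b, f p t := by
  have := intervalIntegral.continuous_parametric_intervalIntegral_of_continuous'
    (μ := volume) hf a b
  exact this.congr fun p => (ioo_eq_ii hab _).symm

lemma cs_Ioo {a b : ℝ} {f g : ℝ → ℝ} (hf : Continuous f) (hg : Continuous g)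
    (hf0 : ∀ t, 0 ≤ f t) (hg0 : ∀ t, 0 ≤ g t) :
    ∫ t in Set.Ioo a b, f t * g t ≤
      Real.sqrt (∫ t in Set.Ioo a b, (f t)^2) * Real.sqrt (∫ t in Set.Ioo a b, (g t)^2) := by
  haveI : IsFiniteMeasure (volume.restrict (Set.Ioo a b)) := by
    constructor
    rw [Measure.restrict_apply_univ, Real.volume_Ioo]
    exact ENNReal.ofReal_lt_top
  have memf : ∀ (u : ℝ → ℝ), Continuous u →
      MemLp u (ENNReal.ofReal 2) (volume.restrict (Set.Ioo a b)) := by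
    intro u hu
    obtain ⟨M, hM⟩ := (isCompact_Icc (a:=a) (b:=b)).exists_bound_of_continuousOn hu.continuousOn
    refine (memLp_top_of_bound hu.aestronglyMeasurable M ?_).mono_exponent le_top
    exact (ae_restrict_iff' measurableSet_Ioo).2 (Filter.Eventually.of_forall
      fun t ht => hM t (Set.Ioo_subset_Icc_self ht))
  have hpq : Real.HolderConjugate 2 2 := Real.holderConjugate_iff.2 ⟨one_lt_two, by norm_num⟩
  have := MeasureTheory.integral_mul_le_Lp_mul_Lq_of_nonneg (μ := volume.restrict (Set.Ioo a b)) hpq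
    (Filter.Eventually.of_forall hf0) (Filter.Eventually.of_forall hg0) (memf f hf) (memf g hg)
  calc ∫ t in Set.Ioo a b, f t * g t
      ≤ (∫ t in Set.Ioo a b, f t ^ (2:ℝ)) ^ (1/(2:ℝ)) * (∫ t in Set.Ioo a b, g t ^ (2:ℝ)) ^ (1/(2:ℝ)) := this
    _ = Real.sqrt (∫ t in Set.Ioo a b, (f t)^2) * Real.sqrt (∫ t in Set.Ioo a b, (g t)^2) := by
        rw [Real.sqrt_eq_rpow, Real.sqrt_eq_rpow]
        norm_num [show ((2:ℝ)) = ((2:ℕ):ℝ) by norm_num, Real.rpow_natCast]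

lemma line_bound {g g' : ℝ → ℝ} (hg : Continuous g) (hg' : Continuous g')
    (hd : ∀ u, HasDerivAt g (g' u) u) {x : ℝ} (hx : x ∈ Set.Icc (0:ℝ) 1) :
    g x ≤ (∫ u in Set.Ioo (0:ℝ) 1, g u) + ∫ u in Set.Ioo (0:ℝ) 1, |g' u| := by
  obtain ⟨x₀, hx₀, hmin⟩ := isCompact_Icc.exists_isMinOn (Set.nonempty_Icc.2 zero_le_one)
    (hg.continuousOn (s := Set.Icc (0:ℝ) 1))
  have h1 : g x₀ ≤ ∫ u in Set.Ioo (0:ℝ) 1, g u := by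
    have := MeasureTheory.setIntegral_mono_on (μ := volume)
      (f := fun _ => g x₀) (g := g) (integrableOn_const (by simp [Real.volume_Ioo]))
      (contIntegrableOn hg 0 1) measurableSet_Ioo
      (fun u hu => hmin (Set.Ioo_subset_Icc_self hu))
    simpa [Real.volume_Ioo] using this
  have h2 : g x - g x₀ = ∫ u in x₀..x, g' u :=
    (intervalIntegral.integral_eq_sub_of_hasDerivAt (fun u _ => hd u)
      (hg'.intervalIntegrable _ _)).symm
  have h3 : |∫ u in x₀..x, g' u| ≤ ∫ u in Set.Ioo (0:ℝ) 1, |g' u| := by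
    calc |∫ u in x₀..x, g' u| ≤ ∫ u in Set.uIoc x₀ x, |g' u| :=
          by simpa using intervalIntegral.norm_integral_le_integral_norm_uIoc (a := x₀) (b := x) (f := g') (μ := volume)
      _ ≤ ∫ u in Set.Ioc (0:ℝ) 1, |g' u| := by
          apply MeasureTheory.setIntegral_mono_set
          · exact (hg'.abs.integrableOn_Icc).mono_set Set.Ioc_subset_Icc_self
          · exact Filter.Eventually.of_forall fun u => abs_nonneg _
          · refine (Set.Ioc_subset_Ioc (le_min hx₀.1 hx.1) (max_le hx₀.2 hx.2)).eventuallyLE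
      _ = ∫ u in Set.Ioo (0:ℝ) 1, |g' u| := MeasureTheory.integral_Ioc_eq_integral_Ioo
  have := le_abs_self (∫ u in x₀..x, g' u)
  linarith

lemma param_deriv {a b : ℝ} (hab : a ≤ b) (f f' : ℝ → ℝ → ℝ)
    (hf : Continuous ↿f) (hf' : Continuous ↿f')
    (hd : ∀ t z, HasDerivAt (fun s => f s z) (f' t z) t) (x : ℝ) :
    HasDerivAt (fun t => ∫ z in Set.Ioo a b, f t z) (∫ z in Set.Ioo a b, f' x z) x := by
  obtain ⟨M, hM⟩ := ((isCompact_Icc (a := x - 1) (b := x + 1)).prod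
    (isCompact_Icc (a := a) (b := b))).exists_bound_of_continuousOn hf'.continuousOn
  have key := intervalIntegral.hasDerivAt_integral_of_dominated_loc_of_deriv_le
    (F := fun t z => f t z) (F' := fun t z => f' t z) (a := a) (b := b) (μ := volume)
    (x₀ := x) (bound := fun _ => M) (s := Metric.ball x 1) (Metric.ball_mem_nhds x one_pos)
    (Filter.Eventually.of_forall fun t => (hf.uncurry_left t).aestronglyMeasurable)
    ((hf.uncurry_left x).intervalIntegrable a b)
    ((hf'.uncurry_left x).aestronglyMeasurable)
    (Filter.Eventually.of_forall fun z hz t ht => by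
      have h1 : t ∈ Set.Icc (x - 1) (x + 1) := by
        have := Metric.mem_ball.1 ht
        rw [Real.dist_eq, abs_lt] at this
        constructor <;> linarith [this.1, this.2]
      have h2 : z ∈ Set.Icc a b := by
        rcases hz with ⟨h3, h4⟩
        rw [min_eq_left hab] at h3
        rw [max_eq_right hab] at h4
        exact ⟨h3.le, h4⟩
      exact hM (t, z) ⟨h1, h2⟩)
    (intervalIntegrable_const)
    (Filter.Eventually.of_forall fun z _ t _ => hd t z)
  have fe : (fun t => ∫ z in Set.Ioo a b, f t z) = fun t => ∫ z in a..b, f t z :=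
    funext fun t => ioo_eq_ii hab _
  rw [fe, ioo_eq_ii hab]
  exact key.2

lemma fubini_box (f : ℝ → ℝ → ℝ) (hf : Continuous ↿f) :
    ∫ x in Set.Ioo (0:ℝ) 1, ∫ y in Set.Ioo (0:ℝ) 1, f x y
      = ∫ y in Set.Ioo (0:ℝ) 1, ∫ x in Set.Ioo (0:ℝ) 1, f x y := by
  apply MeasureTheory.integral_integral_swap
  rw [Measure.prod_restrict]
  have : IntegrableOn (↿f) (Set.Icc (0:ℝ) 1 ×ˢ Set.Icc (0:ℝ) 1) (volume.prod volume) := by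
    rw [← Measure.volume_eq_prod]
    exact hf.continuousOn.integrableOn_compact (isCompact_Icc.prod isCompact_Icc)
  rw [← Measure.volume_eq_prod]
  exact ((by rw [Measure.volume_eq_prod]; exact this : IntegrableOn (↿f) _ volume)).mono_set
    (Set.prod_mono Set.Ioo_subset_Icc_self Set.Ioo_subset_Icc_self)

lemma tripleCS {a b : ℝ} (hab : a ≤ b) (u w : ℝ → ℝ → ℝ → ℝ)
    (hu : Continuous fun p : ℝ × ℝ × ℝ => u p.1 p.2.1 p.2.2)
    (hw : Continuous fun p : ℝ × ℝ × ℝ => w p.1 p.2.1 p.2.2)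
    (hu0 : ∀ x y z, 0 ≤ u x y z) (hw0 : ∀ x y z, 0 ≤ w x y z) :
    (∫ x in Set.Ioo (0:ℝ) 1, ∫ y in Set.Ioo (0:ℝ) 1, ∫ z in Set.Ioo a b,
        u x y z * w x y z)
      ≤ Real.sqrt (∫ x in Set.Ioo (0:ℝ) 1, ∫ y in Set.Ioo (0:ℝ) 1, ∫ z in Set.Ioo a b,
            (u x y z)^2)
        * Real.sqrt (∫ x in Set.Ioo (0:ℝ) 1, ∫ y in Set.Ioo (0:ℝ) 1, ∫ z in Set.Ioo a b,
            (w x y z)^2) := by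
  have reassoc : Continuous fun q : (ℝ × ℝ) × ℝ => ((q.1.1, q.1.2, q.2) : ℝ × ℝ × ℝ) :=
    (continuous_fst.comp continuous_fst).prodMk
      ((continuous_snd.comp continuous_fst).prodMk continuous_snd)
  -- section continuity helpers
  have seczu : ∀ x y, Continuous fun z => u x y z := fun x y =>
    hu.comp (continuous_const.prodMk (continuous_const.prodMk continuous_id))
  have seczw : ∀ x y, Continuous fun z => w x y z := fun x y =>
    hw.comp (continuous_const.prodMk (continuous_const.prodMk continuous_id))
  set U1 : ℝ × ℝ → ℝ := fun p => ∫ z in Set.Ioo a b, (u p.1 p.2 z)^2 with hU1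
  set W1 : ℝ × ℝ → ℝ := fun p => ∫ z in Set.Ioo a b, (w p.1 p.2 z)^2 with hW1
  have contU1 : Continuous U1 :=
    param_cont (fun (p : ℝ × ℝ) z => (u p.1 p.2 z)^2) (by exact (hu.comp reassoc).pow 2) a b hab
  have contW1 : Continuous W1 :=
    param_cont (fun (p : ℝ × ℝ) z => (w p.1 p.2 z)^2) (by exact (hw.comp reassoc).pow 2) a b hab
  have U1nn : ∀ p, 0 ≤ U1 p := fun p =>
    setIntegral_nonneg measurableSet_Ioo fun z _ => sq_nonneg _
  have W1nn : ∀ p, 0 ≤ W1 p := fun p =>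
    setIntegral_nonneg measurableSet_Ioo fun z _ => sq_nonneg _
  set U2 : ℝ → ℝ := fun x => ∫ y in Set.Ioo (0:ℝ) 1, U1 (x, y) with hU2
  set W2 : ℝ → ℝ := fun x => ∫ y in Set.Ioo (0:ℝ) 1, W1 (x, y) with hW2
  have contU2 : Continuous U2 :=
    param_cont (fun x y => U1 (x, y)) (contU1.comp (continuous_fst.prodMk continuous_snd)) 0 1
      zero_le_one
  have contW2 : Continuous W2 :=
    param_cont (fun x y => W1 (x, y)) (contW1.comp (continuous_fst.prodMk continuous_snd)) 0 1
      zero_le_one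
  have U2nn : ∀ x, 0 ≤ U2 x := fun x =>
    setIntegral_nonneg measurableSet_Ioo fun y _ => U1nn _
  have W2nn : ∀ x, 0 ≤ W2 x := fun x =>
    setIntegral_nonneg measurableSet_Ioo fun y _ => W1nn _
  -- continuity of the double-variable inner integral
  have contUW1 : Continuous fun p : ℝ × ℝ => ∫ z in Set.Ioo a b, u p.1 p.2 z * w p.1 p.2 z :=
    param_cont (fun (p : ℝ × ℝ) z => u p.1 p.2 z * w p.1 p.2 z)
      (by exact (hu.comp reassoc).mul (hw.comp reassoc)) a b hab
  have stepz : ∀ x y, ∫ z in Set.Ioo a b, u x y z * w x y z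
      ≤ Real.sqrt (U1 (x, y)) * Real.sqrt (W1 (x, y)) := fun x y =>
    cs_Ioo (seczu x y) (seczw x y) (hu0 x y) (hw0 x y)
  have stepy : ∀ x, ∫ y in Set.Ioo (0:ℝ) 1, ∫ z in Set.Ioo a b, u x y z * w x y z
      ≤ Real.sqrt (U2 x) * Real.sqrt (W2 x) := by
    intro x
    have mono : ∫ y in Set.Ioo (0:ℝ) 1, ∫ z in Set.Ioo a b, u x y z * w x y z
        ≤ ∫ y in Set.Ioo (0:ℝ) 1, Real.sqrt (U1 (x, y)) * Real.sqrt (W1 (x, y)) := by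
      apply MeasureTheory.setIntegral_mono_on
      · exact contIntegrableOn (contUW1.comp (Continuous.prodMk_right x)) 0 1
      · exact contIntegrableOn
          (((Real.continuous_sqrt.comp (contU1.comp (Continuous.prodMk_right x))).mul
            (Real.continuous_sqrt.comp (contW1.comp (Continuous.prodMk_right x))))) 0 1
      · exact measurableSet_Ioo
      · intro y _; exact stepz x y
    have cs := cs_Ioo (a := 0) (b := 1)
      (f := fun y => Real.sqrt (U1 (x, y))) (g := fun y => Real.sqrt (W1 (x, y)))
      (Real.continuous_sqrt.comp (contU1.comp (Continuous.prodMk_right x)))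
      (Real.continuous_sqrt.comp (contW1.comp (Continuous.prodMk_right x)))
      (fun y => Real.sqrt_nonneg _) (fun y => Real.sqrt_nonneg _)
    have e1 : ∀ y : ℝ, (Real.sqrt (U1 (x, y)))^2 = U1 (x, y) := fun y => Real.sq_sqrt (U1nn _)
    have e2 : ∀ y : ℝ, (Real.sqrt (W1 (x, y)))^2 = W1 (x, y) := fun y => Real.sq_sqrt (W1nn _)
    simp only [e1, e2] at cs
    exact mono.trans cs
  have mono2 : ∫ x in Set.Ioo (0:ℝ) 1, ∫ y in Set.Ioo (0:ℝ) 1, ∫ z in Set.Ioo a b,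
        u x y z * w x y z
      ≤ ∫ x in Set.Ioo (0:ℝ) 1, Real.sqrt (U2 x) * Real.sqrt (W2 x) := by
    apply MeasureTheory.setIntegral_mono_on
    · refine contIntegrableOn (param_cont (X := ℝ)
        (fun x y => ∫ z in Set.Ioo a b, u x y z * w x y z) ?_ 0 1 zero_le_one) 0 1
      exact contUW1.comp (continuous_fst.prodMk continuous_snd)
    · exact contIntegrableOn ((Real.continuous_sqrt.comp contU2).mul
        (Real.continuous_sqrt.comp contW2)) 0 1
    · exact measurableSet_Ioo
    · intro x _; exact stepy x
  have cs2 := cs_Ioo (a := 0) (b := 1)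
    (f := fun x => Real.sqrt (U2 x)) (g := fun x => Real.sqrt (W2 x))
    (Real.continuous_sqrt.comp contU2) (Real.continuous_sqrt.comp contW2)
    (fun x => Real.sqrt_nonneg _) (fun x => Real.sqrt_nonneg _)
  have e1 : ∀ x : ℝ, (Real.sqrt (U2 x))^2 = U2 x := fun x => Real.sq_sqrt (U2nn _)
  have e2 : ∀ x : ℝ, (Real.sqrt (W2 x))^2 = W2 x := fun x => Real.sq_sqrt (W2nn _)
  simp only [e1, e2] at cs2
  exact mono2.trans cs2

section Derivs
variable {ψ : ℝ → ℝ → ℝ → ℝ} (hψ : Smooth3 ψ)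
include hψ

lemma hasDerivAt_X' (x y z : ℝ) :
    HasDerivAt (fun t => ψ t y z)
      (fderiv ℝ (fun p : ℝ × ℝ × ℝ => ψ p.1 p.2.1 p.2.2) (x, y, z) (1, 0, 0)) x := by
  have hline : HasDerivAt (fun t : ℝ => ((t, y, z) : ℝ × ℝ × ℝ)) (1, 0, 0) x :=
    (hasDerivAt_id x).prodMk (hasDerivAt_const x ((y, z) : ℝ × ℝ))
  exact ((hψ.differentiable (by simp)) (x, y, z)).hasFDerivAt.comp_hasDerivAt x hline

lemma dX_eq (x y z : ℝ) :
    dX ψ x y z = fderiv ℝ (fun p : ℝ × ℝ × ℝ => ψ p.1 p.2.1 p.2.2) (x, y, z) (1, 0, 0) :=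
  (hasDerivAt_X' hψ x y z).deriv

lemma hasDerivAt_X (x y z : ℝ) : HasDerivAt (fun t => ψ t y z) (dX ψ x y z) x := by
  rw [dX_eq hψ]; exact hasDerivAt_X' hψ x y z

lemma contdX : Continuous fun p : ℝ × ℝ × ℝ => dX ψ p.1 p.2.1 p.2.2 := by
  have hc : Continuous fun p : ℝ × ℝ × ℝ =>
      fderiv ℝ (fun q : ℝ × ℝ × ℝ => ψ q.1 q.2.1 q.2.2) p ((1 : ℝ), (0 : ℝ), (0 : ℝ)) :=
    (hψ.continuous_fderiv (by simp)).clm_apply continuous_const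
  refine hc.congr fun p => ?_
  rw [dX_eq hψ]

lemma hasDerivAt_Y' (x y z : ℝ) :
    HasDerivAt (fun t => ψ x t z)
      (fderiv ℝ (fun p : ℝ × ℝ × ℝ => ψ p.1 p.2.1 p.2.2) (x, y, z) (0, 1, 0)) y := by
  have hline : HasDerivAt (fun t : ℝ => ((x, t, z) : ℝ × ℝ × ℝ)) (0, 1, 0) y :=
    (hasDerivAt_const y x).prodMk ((hasDerivAt_id y).prodMk (hasDerivAt_const y z))
  exact ((hψ.differentiable (by simp)) (x, y, z)).hasFDerivAt.comp_hasDerivAt y hline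

lemma dY_eq (x y z : ℝ) :
    dY ψ x y z = fderiv ℝ (fun p : ℝ × ℝ × ℝ => ψ p.1 p.2.1 p.2.2) (x, y, z) (0, 1, 0) :=
  (hasDerivAt_Y' hψ x y z).deriv

lemma hasDerivAt_Y (x y z : ℝ) : HasDerivAt (fun t => ψ x t z) (dY ψ x y z) y := by
  rw [dY_eq hψ]; exact hasDerivAt_Y' hψ x y z

lemma contdY : Continuous fun p : ℝ × ℝ × ℝ => dY ψ p.1 p.2.1 p.2.2 := by
  have hc : Continuous fun p : ℝ × ℝ × ℝ =>
      fderiv ℝ (fun q : ℝ × ℝ × ℝ => ψ q.1 q.2.1 q.2.2) p ((0 : ℝ), (1 : ℝ), (0 : ℝ)) :=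
    (hψ.continuous_fderiv (by simp)).clm_apply continuous_const
  refine hc.congr fun p => ?_
  rw [dY_eq hψ]

end Derivs

lemma mul_self_rpow_quarter {M : ℝ} (hM : 0 ≤ M) : (M * M) ^ ((1:ℝ)/4) = Real.sqrt M := by
  have e : M * M = (Real.sqrt M) ^ (4:ℕ) := by
    rw [show ((Real.sqrt M) ^ (4:ℕ)) = ((Real.sqrt M)^2)^2 by ring, Real.sq_sqrt hM]
    ring
  rw [e, ← Real.rpow_natCast (Real.sqrt M) 4, ← Real.rpow_mul (Real.sqrt_nonneg M),
    show ((4:ℕ):ℝ) * ((1:ℝ)/4) = 1 by norm_num, Real.rpow_one]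

set_option maxHeartbeats 2000000 in
/-- On `Ω = (0,1)² × (−h,0)`:
`(∫_M (∫_{−h}^0 |ṽ|² dz)⁴)^{1/4} ≤ C ‖ṽ‖_{L⁶}^{3/2} (‖∇_H ṽ‖_{L²} + ‖ṽ‖_{L²})^{1/2}`. -/
theorem anisotropic_L2_power4 (h : ℝ) (hh : 0 < h) :
    ∃ C > (0:ℝ), ∀ ψ : ℝ → ℝ → ℝ → ℝ, Smooth3 ψ → Per3 ψ →
      (∫ x in Set.Ioo (0:ℝ) 1, ∫ y in Set.Ioo (0:ℝ) 1,
          (∫ z in Set.Ioo (-h) (0:ℝ), (ψ x y z) ^ 2) ^ 4) ^ ((1:ℝ) / 4) ≤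
        C * (Lqn h 6 ψ) ^ ((3:ℝ) / 2)
          * ((iInt h (fun x y z => (dX ψ x y z) ^ 2 + (dY ψ x y z) ^ 2)) ^ ((1:ℝ) / 2)
              + L2n h ψ) ^ ((1:ℝ) / 2) := by
  refine ⟨2 * Real.sqrt h, by positivity, fun ψ hψ _per => ?_⟩
  have hIz : -h ≤ (0:ℝ) := by linarith
  have hc : Continuous fun p : ℝ × ℝ × ℝ => ψ p.1 p.2.1 p.2.2 := hψ.continuous
  have cdx := contdX hψ
  have cdy := contdY hψ
  have reassoc : Continuous fun q : (ℝ × ℝ) × ℝ => ((q.1.1, q.1.2, q.2) : ℝ × ℝ × ℝ) :=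
    (continuous_fst.comp continuous_fst).prodMk
      ((continuous_snd.comp continuous_fst).prodMk continuous_snd)
  -- the function F
  set F : ℝ → ℝ → ℝ := fun x y => ∫ z in Set.Ioo (-h) (0:ℝ), (ψ x y z) ^ 2 with hF
  have contF : Continuous fun p : ℝ × ℝ => F p.1 p.2 :=
    param_cont (fun (p : ℝ × ℝ) z => (ψ p.1 p.2 z) ^ 2) (by exact (hc.comp reassoc).pow 2) (-h) 0 hIz
  have Fnn : ∀ x y, 0 ≤ F x y := fun x y =>
    setIntegral_nonneg measurableSet_Ioo fun z _ => sq_nonneg _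
  -- derivatives of F
  set Fx : ℝ → ℝ → ℝ := fun x y => ∫ z in Set.Ioo (-h) (0:ℝ), 2 * ψ x y z * dX ψ x y z with hFx'
  set Fy : ℝ → ℝ → ℝ := fun x y => ∫ z in Set.Ioo (-h) (0:ℝ), 2 * ψ x y z * dY ψ x y z with hFy'
  have contFx : Continuous fun p : ℝ × ℝ => Fx p.1 p.2 :=
    param_cont (fun (p : ℝ × ℝ) z => 2 * ψ p.1 p.2 z * dX ψ p.1 p.2 z)
      (by exact (continuous_const.mul (hc.comp reassoc)).mul (cdx.comp reassoc)) (-h) 0 hIz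
  have contFy : Continuous fun p : ℝ × ℝ => Fy p.1 p.2 :=
    param_cont (fun (p : ℝ × ℝ) z => 2 * ψ p.1 p.2 z * dY ψ p.1 p.2 z)
      (by exact (continuous_const.mul (hc.comp reassoc)).mul (cdy.comp reassoc)) (-h) 0 hIz
  have secx : ∀ y : ℝ, Continuous fun q : ℝ × ℝ => ((q.1, y, q.2) : ℝ × ℝ × ℝ) := fun y =>
    continuous_fst.prodMk (continuous_const.prodMk continuous_snd)
  have secy : ∀ x : ℝ, Continuous fun q : ℝ × ℝ => ((x, q.1, q.2) : ℝ × ℝ × ℝ) := fun x =>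
    continuous_const.prodMk (continuous_fst.prodMk continuous_snd)
  have hFxD : ∀ x y, HasDerivAt (fun t => F t y) (Fx x y) x := by
    intro x y
    have c1 : Continuous ↿(fun t z => (ψ t y z) ^ 2) := by
      exact (hc.comp (secx y)).pow 2
    have c2 : Continuous ↿(fun t z => 2 * ψ t y z * dX ψ t y z) := by
      exact (continuous_const.mul (hc.comp (secx y))).mul (cdx.comp (secx y))
    exact param_deriv hIz _ _ c1 c2
      (fun t z => by simpa using (hasDerivAt_X hψ t y z).fun_pow 2) x
  have hFyD : ∀ x y, HasDerivAt (fun t => F x t) (Fy x y) y := by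
    intro x y
    have c1 : Continuous ↿(fun t z => (ψ x t z) ^ 2) := by
      exact (hc.comp (secy x)).pow 2
    have c2 : Continuous ↿(fun t z => 2 * ψ x t z * dY ψ x t z) := by
      exact (continuous_const.mul (hc.comp (secy x))).mul (cdy.comp (secy x))
    exact param_deriv hIz _ _ c1 c2
      (fun t z => by simpa using (hasDerivAt_Y hψ x t z).fun_pow 2) y
  -- pointwise line bounds via A and B
  set A : ℝ → ℝ := fun y => (∫ x in Set.Ioo (0:ℝ) 1, (F x y)^2) + ∫ x in Set.Ioo (0:ℝ) 1, |2 * F x y * Fx x y| with hA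
  set B : ℝ → ℝ := fun x => (∫ y in Set.Ioo (0:ℝ) 1, (F x y)^2) + ∫ y in Set.Ioo (0:ℝ) 1, |2 * F x y * Fy x y| with hB
  have secL : Continuous fun t : ℝ => ((t, (0:ℝ)) : ℝ × ℝ) :=
    continuous_id.prodMk continuous_const
  have ptA : ∀ y : ℝ, ∀ x ∈ Set.Icc (0:ℝ) 1, (F x y)^2 ≤ A y := by
    intro y x hx
    have cg : Continuous fun t => (F t y)^2 := by
      exact (contF.comp (continuous_id.prodMk continuous_const)).pow 2
    have cg' : Continuous fun t => 2 * F t y * Fx t y := by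
      exact (continuous_const.mul
          (contF.comp (continuous_id.prodMk continuous_const))).mul
        (contFx.comp (continuous_id.prodMk continuous_const))
    exact line_bound cg cg' (fun u => by simpa using (hFxD u y).fun_pow 2) hx
  have ptB : ∀ x : ℝ, ∀ y ∈ Set.Icc (0:ℝ) 1, (F x y)^2 ≤ B x := by
    intro x y hy
    have cg : Continuous fun t => (F x t)^2 := by
      exact (contF.comp (continuous_const.prodMk continuous_id)).pow 2
    have cg' : Continuous fun t => 2 * F x t * Fy x t := by
      exact (continuous_const.mul
          (contF.comp (continuous_const.prodMk continuous_id))).mul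
        (contFy.comp (continuous_const.prodMk continuous_id))
    exact line_bound cg cg' (fun u => by simpa using (hFyD x u).fun_pow 2) hy
  have Ann : ∀ y, 0 ≤ A y := fun y => add_nonneg
    (setIntegral_nonneg measurableSet_Ioo fun x _ => sq_nonneg _)
    (setIntegral_nonneg measurableSet_Ioo fun x _ => abs_nonneg _)
  have Bnn : ∀ x, 0 ≤ B x := fun x => add_nonneg
    (setIntegral_nonneg measurableSet_Ioo fun y _ => sq_nonneg _)
    (setIntegral_nonneg measurableSet_Ioo fun y _ => abs_nonneg _)
  have swapc : Continuous fun p : ℝ × ℝ => ((p.2, p.1) : ℝ × ℝ) :=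
    continuous_snd.prodMk continuous_fst
  have contA1 : Continuous fun y => ∫ x in Set.Ioo (0:ℝ) 1, (F x y)^2 :=
    param_cont (fun y x => (F x y)^2)
      (by exact (contF.comp swapc).pow 2) 0 1 zero_le_one
  have contA2 : Continuous fun y => ∫ x in Set.Ioo (0:ℝ) 1, |2 * F x y * Fx x y| :=
    param_cont (fun y x => |2 * F x y * Fx x y|)
      (by exact ((continuous_const.mul (contF.comp swapc)).mul
        (contFx.comp swapc)).abs) 0 1 zero_le_one
  have contA : Continuous A := contA1.add contA2
  have contB1 : Continuous fun x => ∫ y in Set.Ioo (0:ℝ) 1, (F x y)^2 :=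
    param_cont (fun x y => (F x y)^2) (by exact contF.pow 2) 0 1 zero_le_one
  have contB2 : Continuous fun x => ∫ y in Set.Ioo (0:ℝ) 1, |2 * F x y * Fy x y| :=
    param_cont (fun x y => |2 * F x y * Fy x y|)
      (by exact ((continuous_const.mul contF).mul contFy).abs) 0 1 zero_le_one
  have contB : Continuous B := contB1.add contB2
  -- Ladyzhenskaya-type step
  have step2 : ∫ x in Set.Ioo (0:ℝ) 1, ∫ y in Set.Ioo (0:ℝ) 1, ((F x y)^2)^2 ≤ (∫ y in Set.Ioo (0:ℝ) 1, A y) * (∫ x in Set.Ioo (0:ℝ) 1, B x) := by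
    have inner : ∀ x ∈ Set.Icc (0:ℝ) 1,
        ∫ y in Set.Ioo (0:ℝ) 1, ((F x y)^2)^2 ≤ (∫ y in Set.Ioo (0:ℝ) 1, A y) * B x := by
      intro x hx
      have mono : ∫ y in Set.Ioo (0:ℝ) 1, ((F x y)^2)^2 ≤ ∫ y in Set.Ioo (0:ℝ) 1, A y * B x := by
        apply MeasureTheory.setIntegral_mono_on
        · exact contIntegrableOn (by exact ((contF.comp (continuous_const.prodMk continuous_id)).pow 2).pow 2) 0 1
        · exact contIntegrableOn (contA.mul continuous_const) 0 1
        · exact measurableSet_Ioo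
        · intro y hy
          have h1 : (F x y)^2 ≤ A y := ptA y x hx
          have h2 : (F x y)^2 ≤ B x := ptB x y (Set.Ioo_subset_Icc_self hy)
          have h0 : (0:ℝ) ≤ (F x y)^2 := sq_nonneg _
          calc ((F x y)^2)^2 = (F x y)^2 * (F x y)^2 := by ring
            _ ≤ A y * B x := mul_le_mul h1 h2 h0 (h0.trans h1)
      calc ∫ y in Set.Ioo (0:ℝ) 1, ((F x y)^2)^2 ≤ ∫ y in Set.Ioo (0:ℝ) 1, A y * B x := mono
        _ = (∫ y in Set.Ioo (0:ℝ) 1, A y) * B x := by rw [MeasureTheory.integral_mul_const]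
    have outer : ∫ x in Set.Ioo (0:ℝ) 1, ∫ y in Set.Ioo (0:ℝ) 1, ((F x y)^2)^2
        ≤ ∫ x in Set.Ioo (0:ℝ) 1, (∫ y in Set.Ioo (0:ℝ) 1, A y) * B x := by
      apply MeasureTheory.setIntegral_mono_on
      · refine contIntegrableOn (param_cont (fun x y => ((F x y)^2)^2) ?_ 0 1 zero_le_one) 0 1
        exact (contF.pow 2).pow 2
      · exact contIntegrableOn (continuous_const.mul contB) 0 1
      · exact measurableSet_Ioo
      · intro x hx; exact inner x (Set.Ioo_subset_Icc_self hx)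
    calc ∫ x in Set.Ioo (0:ℝ) 1, ∫ y in Set.Ioo (0:ℝ) 1, ((F x y)^2)^2 ≤ ∫ x in Set.Ioo (0:ℝ) 1, (∫ y in Set.Ioo (0:ℝ) 1, A y) * B x := outer
      _ = (∫ y in Set.Ioo (0:ℝ) 1, A y) * ∫ x in Set.Ioo (0:ℝ) 1, B x := by rw [MeasureTheory.integral_const_mul]
  -- basic quantities
  set K : ℝ := ∫ x in Set.Ioo (0:ℝ) 1, ∫ y in Set.Ioo (0:ℝ) 1, ∫ z in Set.Ioo (-h) (0:ℝ), |ψ x y z|^6 with hKd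
  set L : ℝ := ∫ x in Set.Ioo (0:ℝ) 1, ∫ y in Set.Ioo (0:ℝ) 1, ∫ z in Set.Ioo (-h) (0:ℝ), (ψ x y z)^2 with hLd
  set Dx : ℝ := ∫ x in Set.Ioo (0:ℝ) 1, ∫ y in Set.Ioo (0:ℝ) 1, ∫ z in Set.Ioo (-h) (0:ℝ), (dX ψ x y z)^2 with hDxd
  set Dy : ℝ := ∫ x in Set.Ioo (0:ℝ) 1, ∫ y in Set.Ioo (0:ℝ) 1, ∫ z in Set.Ioo (-h) (0:ℝ), (dY ψ x y z)^2 with hDyd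
  have nn3 : ∀ (f : ℝ → ℝ → ℝ → ℝ), (∀ x y z, 0 ≤ f x y z) →
      (0:ℝ) ≤ ∫ x in Set.Ioo (0:ℝ) 1, ∫ y in Set.Ioo (0:ℝ) 1, ∫ z in Set.Ioo (-h) (0:ℝ), f x y z := fun f hf =>
    setIntegral_nonneg measurableSet_Ioo fun x _ =>
      setIntegral_nonneg measurableSet_Ioo fun y _ =>
        setIntegral_nonneg measurableSet_Ioo fun z _ => hf x y z
  have Knn : 0 ≤ K := nn3 _ fun x y z => pow_nonneg (abs_nonneg _) 6
  have Lnn : 0 ≤ L := nn3 _ fun x y z => sq_nonneg _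
  have Dxnn : 0 ≤ Dx := nn3 _ fun x y z => sq_nonneg _
  have Dynn : 0 ≤ Dy := nn3 _ fun x y z => sq_nonneg _
  -- cube bound
  have cube : ∀ x y, (F x y)^3 ≤ h^2 * ∫ z in Set.Ioo (-h) (0:ℝ), |ψ x y z|^6 := by
    intro x y
    have secz : Continuous fun z => ψ x y z :=
      hc.comp (continuous_const.prodMk (continuous_const.prodMk continuous_id))
    have knn : (0:ℝ) ≤ ∫ z in Set.Ioo (-h) (0:ℝ), |ψ x y z|^6 :=
      setIntegral_nonneg measurableSet_Ioo fun z _ => pow_nonneg (abs_nonneg _) 6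
    have I4nn : (0:ℝ) ≤ ∫ z in Set.Ioo (-h) (0:ℝ), (ψ x y z)^4 :=
      setIntegral_nonneg measurableSet_Ioo fun z _ => by positivity
    have c1 : F x y ≤ Real.sqrt (∫ z in Set.Ioo (-h) (0:ℝ), (ψ x y z)^4) * Real.sqrt h := by
      have key := cs_Ioo (a := -h) (b := (0:ℝ)) (f := fun z => (ψ x y z)^2)
        (g := fun _ => (1:ℝ)) (secz.pow 2) continuous_const (fun z => sq_nonneg _) (fun z => zero_le_one)
      simp only [mul_one, one_pow] at key
      have e1 : ∫ z in Set.Ioo (-h) (0:ℝ), ((ψ x y z)^2)^2 = ∫ z in Set.Ioo (-h) (0:ℝ), (ψ x y z)^4 :=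
        setIntegral_congr_fun measurableSet_Ioo fun z _ => by ring
      have e2 : ∫ z in Set.Ioo (-h) (0:ℝ), (1:ℝ) = h := by
        rw [MeasureTheory.setIntegral_const]
        simp [Real.volume_Ioo, ENNReal.toReal_ofReal hh.le, hh.le]
      rw [e1, e2] at key
      exact key
    have c2 : (∫ z in Set.Ioo (-h) (0:ℝ), (ψ x y z)^4)
        ≤ Real.sqrt (∫ z in Set.Ioo (-h) (0:ℝ), |ψ x y z|^6) * Real.sqrt (F x y) := by
      have key := cs_Ioo (a := -h) (b := (0:ℝ)) (f := fun z => |ψ x y z|^3) (g := fun z => |ψ x y z|)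
        ((secz.abs).pow 3) secz.abs
        (fun z => pow_nonneg (abs_nonneg _) 3) (fun z => abs_nonneg _)
      have e1 : ∫ z in Set.Ioo (-h) (0:ℝ), |ψ x y z|^3 * |ψ x y z| = ∫ z in Set.Ioo (-h) (0:ℝ), (ψ x y z)^4 :=
        setIntegral_congr_fun measurableSet_Ioo fun z _ => by
          rcases abs_choice (ψ x y z) with hab | hab <;> rw [hab] <;> ring
      have e2 : ∫ z in Set.Ioo (-h) (0:ℝ), (|ψ x y z|^3)^2 = ∫ z in Set.Ioo (-h) (0:ℝ), |ψ x y z|^6 :=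
        setIntegral_congr_fun measurableSet_Ioo fun z _ => by ring
      have e3 : ∫ z in Set.Ioo (-h) (0:ℝ), |ψ x y z|^2 = F x y :=
        setIntegral_congr_fun measurableSet_Ioo fun z _ => sq_abs _
      rw [e1, e2, e3] at key
      exact key
    have Fnn' := Fnn x y
    have e4 : (F x y)^2 ≤ (∫ z in Set.Ioo (-h) (0:ℝ), (ψ x y z)^4) * h := by
      calc (F x y)^2 ≤ (Real.sqrt (∫ z in Set.Ioo (-h) (0:ℝ), (ψ x y z)^4) * Real.sqrt h)^2 :=
            pow_le_pow_left₀ Fnn' c1 2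
        _ = (∫ z in Set.Ioo (-h) (0:ℝ), (ψ x y z)^4) * h := by
            rw [mul_pow, Real.sq_sqrt I4nn, Real.sq_sqrt hh.le]
    have e5 : ((F x y)^2)^2 ≤ ((∫ z in Set.Ioo (-h) (0:ℝ), |ψ x y z|^6) * F x y) * h^2 := by
      have h2 : (∫ z in Set.Ioo (-h) (0:ℝ), (ψ x y z)^4) * h
          ≤ (Real.sqrt (∫ z in Set.Ioo (-h) (0:ℝ), |ψ x y z|^6) * Real.sqrt (F x y)) * h :=
        mul_le_mul_of_nonneg_right c2 hh.le
      calc ((F x y)^2)^2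
          ≤ ((Real.sqrt (∫ z in Set.Ioo (-h) (0:ℝ), |ψ x y z|^6) * Real.sqrt (F x y)) * h)^2 :=
            pow_le_pow_left₀ (sq_nonneg _) (e4.trans h2) 2
        _ = ((∫ z in Set.Ioo (-h) (0:ℝ), |ψ x y z|^6) * F x y) * h^2 := by
            rw [mul_pow, mul_pow, Real.sq_sqrt knn, Real.sq_sqrt Fnn']
    rcases eq_or_lt_of_le Fnn' with heq | hpos
    · rw [← heq]
      simpa using mul_nonneg (sq_nonneg h) knn
    · have hmul : (F x y)^3 * F x y ≤ (h^2 * ∫ z in Set.Ioo (-h) (0:ℝ), |ψ x y z|^6) * F x y := by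
        nlinarith [e5]
      exact le_of_mul_le_mul_right hmul hpos
  -- slice identity
  have eQ : ∀ x y, ∫ z in Set.Ioo (-h) (0:ℝ), (F x y * |ψ x y z|)^2 = (F x y)^3 := by
    intro x y
    have e1 : ∫ z in Set.Ioo (-h) (0:ℝ), (F x y * |ψ x y z|)^2 = ∫ z in Set.Ioo (-h) (0:ℝ), (F x y)^2 * (ψ x y z)^2 :=
      setIntegral_congr_fun measurableSet_Ioo fun z _ => by rw [mul_pow, sq_abs]
    rw [e1, MeasureTheory.integral_const_mul]
    have e2 : (∫ z in Set.Ioo (-h) (0:ℝ), (ψ x y z)^2) = F x y := rfl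
    rw [e2]; ring
  have contK6 : Continuous fun p : ℝ × ℝ => ∫ z in Set.Ioo (-h) (0:ℝ), |ψ p.1 p.2 z|^6 :=
    param_cont (fun (p : ℝ × ℝ) z => |ψ p.1 p.2 z|^6)
      (by exact ((hc.comp reassoc).abs.pow 6)) (-h) 0 hIz
  have contF3 : Continuous fun p : ℝ × ℝ => (F p.1 p.2)^3 := contF.pow 3
  have Qxy : ∫ x in Set.Ioo (0:ℝ) 1, ∫ y in Set.Ioo (0:ℝ) 1, ∫ z in Set.Ioo (-h) (0:ℝ), (F x y * |ψ x y z|)^2 ≤ h^2 * K := by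
    simp only [eQ]
    have mono : ∫ x in Set.Ioo (0:ℝ) 1, ∫ y in Set.Ioo (0:ℝ) 1, (F x y)^3
        ≤ ∫ x in Set.Ioo (0:ℝ) 1, ∫ y in Set.Ioo (0:ℝ) 1, h^2 * ∫ z in Set.Ioo (-h) (0:ℝ), |ψ x y z|^6 := by
      apply MeasureTheory.setIntegral_mono_on
      · exact contIntegrableOn (param_cont (fun x y => (F x y)^3)
          (by exact contF3) 0 1 zero_le_one) 0 1
      · exact contIntegrableOn (param_cont (fun x y => h^2 * ∫ z in Set.Ioo (-h) (0:ℝ), |ψ x y z|^6)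
          (by exact continuous_const.mul contK6) 0 1 zero_le_one) 0 1
      · exact measurableSet_Ioo
      · intro x _
        apply MeasureTheory.setIntegral_mono_on
        · exact contIntegrableOn (by exact contF3.comp (Continuous.prodMk_right x)) 0 1
        · exact contIntegrableOn (by exact (continuous_const.mul (contK6.comp (Continuous.prodMk_right x)))) 0 1
        · exact measurableSet_Ioo
        · intro y _; exact cube x y
    calc ∫ x in Set.Ioo (0:ℝ) 1, ∫ y in Set.Ioo (0:ℝ) 1, (F x y)^3
        ≤ ∫ x in Set.Ioo (0:ℝ) 1, ∫ y in Set.Ioo (0:ℝ) 1, h^2 * ∫ z in Set.Ioo (-h) (0:ℝ), |ψ x y z|^6 := mono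
      _ = h^2 * K := by simp only [MeasureTheory.integral_const_mul, hKd]
  have Qyx : ∫ y in Set.Ioo (0:ℝ) 1, ∫ x in Set.Ioo (0:ℝ) 1, ∫ z in Set.Ioo (-h) (0:ℝ), (F x y * |ψ x y z|)^2 ≤ h^2 * K := by
    simp only [eQ]
    have mono : ∫ y in Set.Ioo (0:ℝ) 1, ∫ x in Set.Ioo (0:ℝ) 1, (F x y)^3
        ≤ ∫ y in Set.Ioo (0:ℝ) 1, ∫ x in Set.Ioo (0:ℝ) 1, h^2 * ∫ z in Set.Ioo (-h) (0:ℝ), |ψ x y z|^6 := by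
      apply MeasureTheory.setIntegral_mono_on
      · exact contIntegrableOn (param_cont (fun y x => (F x y)^3)
          (by exact contF3.comp swapc) 0 1 zero_le_one) 0 1
      · exact contIntegrableOn (param_cont (fun y x => h^2 * ∫ z in Set.Ioo (-h) (0:ℝ), |ψ x y z|^6)
          (by exact continuous_const.mul (contK6.comp swapc)) 0 1 zero_le_one) 0 1
      · exact measurableSet_Ioo
      · intro y _
        apply MeasureTheory.setIntegral_mono_on
        · exact contIntegrableOn (by exact contF3.comp (continuous_id.prodMk continuous_const)) 0 1
        · exact contIntegrableOn (by exact continuous_const.mul (contK6.comp (continuous_id.prodMk continuous_const))) 0 1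
        · exact measurableSet_Ioo
        · intro x _; exact cube x y
    have fub : ∫ y in Set.Ioo (0:ℝ) 1, ∫ x in Set.Ioo (0:ℝ) 1, ∫ z in Set.Ioo (-h) (0:ℝ), |ψ x y z|^6 = K := by
      exact (fubini_box (fun x y => ∫ z in Set.Ioo (-h) (0:ℝ), |ψ x y z|^6) (by exact contK6)).symm
    calc ∫ y in Set.Ioo (0:ℝ) 1, ∫ x in Set.Ioo (0:ℝ) 1, (F x y)^3
        ≤ ∫ y in Set.Ioo (0:ℝ) 1, ∫ x in Set.Ioo (0:ℝ) 1, h^2 * ∫ z in Set.Ioo (-h) (0:ℝ), |ψ x y z|^6 := mono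
      _ = h^2 * ∫ y in Set.Ioo (0:ℝ) 1, ∫ x in Set.Ioo (0:ℝ) 1, ∫ z in Set.Ioo (-h) (0:ℝ), |ψ x y z|^6 := by
          simp only [MeasureTheory.integral_const_mul]
      _ = h^2 * K := by rw [fub]
  -- projection continuity helpers
  have proj12 : Continuous fun p : ℝ × ℝ × ℝ => ((p.1, p.2.1) : ℝ × ℝ) :=
    continuous_fst.prodMk (continuous_fst.comp continuous_snd)
  have proj21 : Continuous fun p : ℝ × ℝ × ℝ => ((p.2.1, p.1) : ℝ × ℝ) :=
    (continuous_fst.comp continuous_snd).prodMk continuous_fst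
  have swap123 : Continuous fun p : ℝ × ℝ × ℝ => ((p.2.1, p.1, p.2.2) : ℝ × ℝ × ℝ) :=
    (continuous_fst.comp continuous_snd).prodMk
      (continuous_fst.prodMk (continuous_snd.comp continuous_snd))
  -- square-root quantities
  have sqKnn : (0:ℝ) ≤ h * Real.sqrt K := mul_nonneg hh.le (Real.sqrt_nonneg _)
  have sqQxy : Real.sqrt (∫ x in Set.Ioo (0:ℝ) 1, ∫ y in Set.Ioo (0:ℝ) 1,
      ∫ z in Set.Ioo (-h) (0:ℝ), (F x y * |ψ x y z|)^2) ≤ h * Real.sqrt K := by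
    calc Real.sqrt _ ≤ Real.sqrt (h^2 * K) := Real.sqrt_le_sqrt Qxy
      _ = h * Real.sqrt K := by
          rw [Real.sqrt_mul (sq_nonneg h), Real.sqrt_sq hh.le]
  have sqQyx : Real.sqrt (∫ y in Set.Ioo (0:ℝ) 1, ∫ x in Set.Ioo (0:ℝ) 1,
      ∫ z in Set.Ioo (-h) (0:ℝ), (F x y * |ψ x y z|)^2) ≤ h * Real.sqrt K := by
    calc Real.sqrt _ ≤ Real.sqrt (h^2 * K) := Real.sqrt_le_sqrt Qyx
      _ = h * Real.sqrt K := by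
          rw [Real.sqrt_mul (sq_nonneg h), Real.sqrt_sq hh.le]
  -- identity for F^2 as a z-integral
  have eT1 : ∀ x y, (F x y)^2
      = ∫ z in Set.Ioo (-h) (0:ℝ), (F x y * |ψ x y z|) * |ψ x y z| := by
    intro x y
    have e1 : ∫ z in Set.Ioo (-h) (0:ℝ), (F x y * |ψ x y z|) * |ψ x y z|
        = ∫ z in Set.Ioo (-h) (0:ℝ), F x y * (ψ x y z)^2 :=
      setIntegral_congr_fun measurableSet_Ioo fun z _ => by
        rw [mul_assoc, abs_mul_abs_self, ← sq]
    rw [e1, MeasureTheory.integral_const_mul]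
    have e2 : (∫ z in Set.Ioo (-h) (0:ℝ), (ψ x y z)^2) = F x y := rfl
    rw [e2]; ring
  -- bound for the F² double integral, x-first order
  have T1xy : ∫ x in Set.Ioo (0:ℝ) 1, ∫ y in Set.Ioo (0:ℝ) 1, (F x y)^2
      ≤ (h * Real.sqrt K) * Real.sqrt L := by
    simp only [eT1]
    have key := tripleCS hIz (fun x y z => F x y * |ψ x y z|) (fun x y z => |ψ x y z|)
      (by exact (contF.comp proj12).mul hc.abs) (by exact hc.abs)
      (fun x y z => mul_nonneg (Fnn x y) (abs_nonneg _)) (fun x y z => abs_nonneg _)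
    have eab : ∫ x in Set.Ioo (0:ℝ) 1, ∫ y in Set.Ioo (0:ℝ) 1,
        ∫ z in Set.Ioo (-h) (0:ℝ), |ψ x y z|^2 = L := by
      simp only [sq_abs, hLd]
    rw [eab] at key
    calc ∫ x in Set.Ioo (0:ℝ) 1, ∫ y in Set.Ioo (0:ℝ) 1,
          ∫ z in Set.Ioo (-h) (0:ℝ), (F x y * |ψ x y z|) * |ψ x y z| ≤ _ := key
      _ ≤ (h * Real.sqrt K) * Real.sqrt L :=
          mul_le_mul_of_nonneg_right sqQxy (Real.sqrt_nonneg _)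
  -- bound for the F² double integral, y-first order
  have T1yx : ∫ y in Set.Ioo (0:ℝ) 1, ∫ x in Set.Ioo (0:ℝ) 1, (F x y)^2
      ≤ (h * Real.sqrt K) * Real.sqrt L := by
    simp only [eT1]
    have key := tripleCS hIz (fun y x z => F x y * |ψ x y z|) (fun y x z => |ψ x y z|)
      (by exact (contF.comp proj21).mul ((hc.comp swap123).abs))
      (by exact (hc.comp swap123).abs)
      (fun y x z => mul_nonneg (Fnn x y) (abs_nonneg _)) (fun y x z => abs_nonneg _)
    have eab : ∫ y in Set.Ioo (0:ℝ) 1, ∫ x in Set.Ioo (0:ℝ) 1,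
        ∫ z in Set.Ioo (-h) (0:ℝ), |ψ x y z|^2 = L := by
      simp only [sq_abs]
      rw [hLd]
      exact (fubini_box (fun x y => ∫ z in Set.Ioo (-h) (0:ℝ), (ψ x y z)^2)
        (by exact contF)).symm
    rw [eab] at key
    calc ∫ y in Set.Ioo (0:ℝ) 1, ∫ x in Set.Ioo (0:ℝ) 1,
          ∫ z in Set.Ioo (-h) (0:ℝ), (F x y * |ψ x y z|) * |ψ x y z| ≤ _ := key
      _ ≤ (h * Real.sqrt K) * Real.sqrt L :=
          mul_le_mul_of_nonneg_right sqQyx (Real.sqrt_nonneg _)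
  -- pointwise bound for the derivative terms
  have pt2Y : ∀ x y, |2 * F x y * Fy x y|
      ≤ ∫ z in Set.Ioo (-h) (0:ℝ), (F x y * |ψ x y z|) * (4 * |dY ψ x y z|) := by
    intro x y
    have habs : |Fy x y| ≤ ∫ z in Set.Ioo (-h) (0:ℝ), 2 * |ψ x y z| * |dY ψ x y z| := by
      simpa [Real.norm_eq_abs] using MeasureTheory.norm_integral_le_integral_norm
        (μ := volume.restrict (Set.Ioo (-h) (0:ℝ))) (fun z => 2 * ψ x y z * dY ψ x y z)
    calc |2 * F x y * Fy x y| = 2 * F x y * |Fy x y| := by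
          rw [abs_mul, abs_of_nonneg (by positivity : (0:ℝ) ≤ 2 * F x y)]
      _ ≤ 2 * F x y * ∫ z in Set.Ioo (-h) (0:ℝ), 2 * |ψ x y z| * |dY ψ x y z| :=
          mul_le_mul_of_nonneg_left habs (by positivity)
      _ = ∫ z in Set.Ioo (-h) (0:ℝ), (2 * F x y) * (2 * |ψ x y z| * |dY ψ x y z|) :=
          (MeasureTheory.integral_const_mul _ _).symm
      _ = ∫ z in Set.Ioo (-h) (0:ℝ), (F x y * |ψ x y z|) * (4 * |dY ψ x y z|) :=
          setIntegral_congr_fun measurableSet_Ioo fun z _ => by ring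
  have pt2X : ∀ x y, |2 * F x y * Fx x y|
      ≤ ∫ z in Set.Ioo (-h) (0:ℝ), (F x y * |ψ x y z|) * (4 * |dX ψ x y z|) := by
    intro x y
    have habs : |Fx x y| ≤ ∫ z in Set.Ioo (-h) (0:ℝ), 2 * |ψ x y z| * |dX ψ x y z| := by
      simpa [Real.norm_eq_abs] using MeasureTheory.norm_integral_le_integral_norm
        (μ := volume.restrict (Set.Ioo (-h) (0:ℝ))) (fun z => 2 * ψ x y z * dX ψ x y z)
    calc |2 * F x y * Fx x y| = 2 * F x y * |Fx x y| := by
          rw [abs_mul, abs_of_nonneg (by positivity : (0:ℝ) ≤ 2 * F x y)]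
      _ ≤ 2 * F x y * ∫ z in Set.Ioo (-h) (0:ℝ), 2 * |ψ x y z| * |dX ψ x y z| :=
          mul_le_mul_of_nonneg_left habs (by positivity)
      _ = ∫ z in Set.Ioo (-h) (0:ℝ), (2 * F x y) * (2 * |ψ x y z| * |dX ψ x y z|) :=
          (MeasureTheory.integral_const_mul _ _).symm
      _ = ∫ z in Set.Ioo (-h) (0:ℝ), (F x y * |ψ x y z|) * (4 * |dX ψ x y z|) :=
          setIntegral_congr_fun measurableSet_Ioo fun z _ => by ring
  have sqrt16 : Real.sqrt 16 = 4 := by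
    rw [show (16:ℝ) = 4^2 by norm_num, Real.sqrt_sq (by norm_num : (0:ℝ) ≤ 4)]
  -- T2, x-first order (uses dY)
  have T2xy : ∫ x in Set.Ioo (0:ℝ) 1, ∫ y in Set.Ioo (0:ℝ) 1, |2 * F x y * Fy x y|
      ≤ (h * Real.sqrt K) * (4 * Real.sqrt Dy) := by
    have contWy : Continuous fun p : ℝ × ℝ => ∫ z in Set.Ioo (-h) (0:ℝ),
        (F p.1 p.2 * |ψ p.1 p.2 z|) * (4 * |dY ψ p.1 p.2 z|) :=
      param_cont (fun (p : ℝ × ℝ) z => (F p.1 p.2 * |ψ p.1 p.2 z|) * (4 * |dY ψ p.1 p.2 z|))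
        (by exact ((contF.comp continuous_fst).mul (hc.comp reassoc).abs).mul (continuous_const.mul (cdy.comp reassoc).abs)) (-h) 0 hIz
    have contWy2 : Continuous fun x : ℝ => ∫ y in Set.Ioo (0:ℝ) 1,
        ∫ z in Set.Ioo (-h) (0:ℝ), (F x y * |ψ x y z|) * (4 * |dY ψ x y z|) :=
      param_cont _ (by exact contWy) 0 1 zero_le_one
    have mono : ∫ x in Set.Ioo (0:ℝ) 1, ∫ y in Set.Ioo (0:ℝ) 1, |2 * F x y * Fy x y|
        ≤ ∫ x in Set.Ioo (0:ℝ) 1, ∫ y in Set.Ioo (0:ℝ) 1, ∫ z in Set.Ioo (-h) (0:ℝ),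
            (F x y * |ψ x y z|) * (4 * |dY ψ x y z|) := by
      apply MeasureTheory.setIntegral_mono_on
      · exact contIntegrableOn contB2 0 1
      · exact contIntegrableOn contWy2 0 1
      · exact measurableSet_Ioo
      · intro x _
        apply MeasureTheory.setIntegral_mono_on
        · exact contIntegrableOn (by exact
            (((continuous_const.mul contF).mul contFy).abs).comp (Continuous.prodMk_right x)) 0 1
        · exact contIntegrableOn (by exact contWy.comp (Continuous.prodMk_right x)) 0 1
        · exact measurableSet_Ioo
        · intro y _; exact pt2Y x y
    have key := tripleCS hIz (fun x y z => F x y * |ψ x y z|)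
      (fun x y z => 4 * |dY ψ x y z|)
      (by exact (contF.comp proj12).mul hc.abs)
      (by exact continuous_const.mul cdy.abs)
      (fun x y z => mul_nonneg (Fnn x y) (abs_nonneg _))
      (fun x y z => by positivity)
    have e16 : ∫ x in Set.Ioo (0:ℝ) 1, ∫ y in Set.Ioo (0:ℝ) 1, ∫ z in Set.Ioo (-h) (0:ℝ),
        (4 * |dY ψ x y z|)^2 = 16 * Dy := by
      have ept : ∀ x y z : ℝ, (4 * |dY ψ x y z|)^2 = 16 * (dY ψ x y z)^2 := fun x y z => by
        rw [mul_pow, sq_abs]; norm_num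
      simp only [ept, MeasureTheory.integral_const_mul, hDyd]
    rw [e16] at key
    have e4 : Real.sqrt (16 * Dy) = 4 * Real.sqrt Dy := by
      rw [Real.sqrt_mul (by norm_num : (0:ℝ) ≤ 16), sqrt16]
    rw [e4] at key
    refine mono.trans (key.trans ?_)
    exact mul_le_mul_of_nonneg_right sqQxy (by positivity)
  -- T2, y-first order (uses dX)
  have T2yx : ∫ y in Set.Ioo (0:ℝ) 1, ∫ x in Set.Ioo (0:ℝ) 1, |2 * F x y * Fx x y|
      ≤ (h * Real.sqrt K) * (4 * Real.sqrt Dx) := by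
    have reassocSwap : Continuous fun q : (ℝ × ℝ) × ℝ => ((q.1.2, q.1.1, q.2) : ℝ × ℝ × ℝ) :=
      (continuous_snd.comp continuous_fst).prodMk
        ((continuous_fst.comp continuous_fst).prodMk continuous_snd)
    have contWx : Continuous fun p : ℝ × ℝ => ∫ z in Set.Ioo (-h) (0:ℝ),
        (F p.2 p.1 * |ψ p.2 p.1 z|) * (4 * |dX ψ p.2 p.1 z|) :=
      param_cont (fun (p : ℝ × ℝ) z => (F p.2 p.1 * |ψ p.2 p.1 z|) * (4 * |dX ψ p.2 p.1 z|))
        (by exact ((contF.comp (swapc.comp continuous_fst)).mul ((hc.comp reassocSwap)).abs).mul (continuous_const.mul ((cdx.comp reassocSwap)).abs)) (-h) 0 hIz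
    have contWx2 : Continuous fun y : ℝ => ∫ x in Set.Ioo (0:ℝ) 1,
        ∫ z in Set.Ioo (-h) (0:ℝ), (F x y * |ψ x y z|) * (4 * |dX ψ x y z|) :=
      param_cont _ (by exact contWx) 0 1 zero_le_one
    have mono : ∫ y in Set.Ioo (0:ℝ) 1, ∫ x in Set.Ioo (0:ℝ) 1, |2 * F x y * Fx x y|
        ≤ ∫ y in Set.Ioo (0:ℝ) 1, ∫ x in Set.Ioo (0:ℝ) 1, ∫ z in Set.Ioo (-h) (0:ℝ),
            (F x y * |ψ x y z|) * (4 * |dX ψ x y z|) := by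
      apply MeasureTheory.setIntegral_mono_on
      · exact contIntegrableOn contA2 0 1
      · exact contIntegrableOn contWx2 0 1
      · exact measurableSet_Ioo
      · intro y _
        apply MeasureTheory.setIntegral_mono_on
        · exact contIntegrableOn (by exact
            ((((continuous_const.mul (contF.comp swapc)).mul
              (contFx.comp swapc)).abs)).comp (Continuous.prodMk_right y)) 0 1
        · exact contIntegrableOn (by exact contWx.comp (Continuous.prodMk_right y)) 0 1
        · exact measurableSet_Ioo
        · intro x _; exact pt2X x y
    have key := tripleCS hIz (fun y x z => F x y * |ψ x y z|)
      (fun y x z => 4 * |dX ψ x y z|)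
      (by exact (contF.comp proj21).mul ((hc.comp swap123)).abs)
      (by exact continuous_const.mul ((cdx.comp swap123)).abs)
      (fun y x z => mul_nonneg (Fnn x y) (abs_nonneg _))
      (fun y x z => by positivity)
    have contDx2 : Continuous fun p : ℝ × ℝ => ∫ z in Set.Ioo (-h) (0:ℝ), (dX ψ p.1 p.2 z)^2 :=
      param_cont (fun (p : ℝ × ℝ) z => (dX ψ p.1 p.2 z)^2) (by exact (cdx.comp reassoc).pow 2) (-h) 0 hIz
    have fubx : ∫ y in Set.Ioo (0:ℝ) 1, ∫ x in Set.Ioo (0:ℝ) 1,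
          ∫ z in Set.Ioo (-h) (0:ℝ), (dX ψ x y z)^2
        = ∫ x in Set.Ioo (0:ℝ) 1, ∫ y in Set.Ioo (0:ℝ) 1,
          ∫ z in Set.Ioo (-h) (0:ℝ), (dX ψ x y z)^2 :=
      (fubini_box (fun x y => ∫ z in Set.Ioo (-h) (0:ℝ), (dX ψ x y z)^2)
        (by exact contDx2)).symm
    have e16 : ∫ y in Set.Ioo (0:ℝ) 1, ∫ x in Set.Ioo (0:ℝ) 1, ∫ z in Set.Ioo (-h) (0:ℝ),
        (4 * |dX ψ x y z|)^2 = 16 * Dx := by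
      have ept : ∀ x y z : ℝ, (4 * |dX ψ x y z|)^2 = 16 * (dX ψ x y z)^2 := fun x y z => by
        rw [mul_pow, sq_abs]; norm_num
      simp only [ept, MeasureTheory.integral_const_mul, fubx, hDxd]
    rw [e16] at key
    have e4 : Real.sqrt (16 * Dx) = 4 * Real.sqrt Dx := by
      rw [Real.sqrt_mul (by norm_num : (0:ℝ) ≤ 16), sqrt16]
    rw [e4] at key
    refine mono.trans (key.trans ?_)
    exact mul_le_mul_of_nonneg_right sqQyx (by positivity)
  -- integrate A and B
  have intA : ∫ y in Set.Ioo (0:ℝ) 1, A y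
      = (∫ y in Set.Ioo (0:ℝ) 1, ∫ x in Set.Ioo (0:ℝ) 1, (F x y)^2)
        + ∫ y in Set.Ioo (0:ℝ) 1, ∫ x in Set.Ioo (0:ℝ) 1, |2 * F x y * Fx x y| :=
    MeasureTheory.integral_add (contIntegrableOn contA1 0 1) (contIntegrableOn contA2 0 1)
  have intB : ∫ x in Set.Ioo (0:ℝ) 1, B x
      = (∫ x in Set.Ioo (0:ℝ) 1, ∫ y in Set.Ioo (0:ℝ) 1, (F x y)^2)
        + ∫ x in Set.Ioo (0:ℝ) 1, ∫ y in Set.Ioo (0:ℝ) 1, |2 * F x y * Fy x y| :=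
    MeasureTheory.integral_add (contIntegrableOn contB1 0 1) (contIntegrableOn contB2 0 1)
  set SS : ℝ := Real.sqrt (Dx + Dy) + Real.sqrt L with hSS
  have SSnn : 0 ≤ SS := add_nonneg (Real.sqrt_nonneg _) (Real.sqrt_nonneg _)
  have sqDxle : Real.sqrt Dx ≤ Real.sqrt (Dx + Dy) := Real.sqrt_le_sqrt (by linarith)
  have sqDyle : Real.sqrt Dy ≤ Real.sqrt (Dx + Dy) := Real.sqrt_le_sqrt (by linarith)
  have boundA : ∫ y in Set.Ioo (0:ℝ) 1, A y ≤ 4 * ((h * Real.sqrt K) * SS) := by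
    rw [intA, hSS]
    have m1 := mul_le_mul_of_nonneg_left sqDxle sqKnn
    have m2 := mul_nonneg sqKnn (Real.sqrt_nonneg L)
    nlinarith [T1yx, T2yx]
  have boundB : ∫ x in Set.Ioo (0:ℝ) 1, B x ≤ 4 * ((h * Real.sqrt K) * SS) := by
    rw [intB, hSS]
    have m1 := mul_le_mul_of_nonneg_left sqDyle sqKnn
    have m2 := mul_nonneg sqKnn (Real.sqrt_nonneg L)
    nlinarith [T1xy, T2xy]
  have intAnn : 0 ≤ ∫ y in Set.Ioo (0:ℝ) 1, A y :=
    setIntegral_nonneg measurableSet_Ioo fun y _ => Ann y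
  have intBnn : 0 ≤ ∫ x in Set.Ioo (0:ℝ) 1, B x :=
    setIntegral_nonneg measurableSet_Ioo fun x _ => Bnn x
  have Mnn : 0 ≤ 4 * ((h * Real.sqrt K) * SS) := by positivity
  have core : ∫ x in Set.Ioo (0:ℝ) 1, ∫ y in Set.Ioo (0:ℝ) 1, ((F x y)^2)^2
      ≤ (4 * ((h * Real.sqrt K) * SS)) * (4 * ((h * Real.sqrt K) * SS)) :=
    step2.trans (mul_le_mul boundA boundB intBnn Mnn)
  have Pnn : 0 ≤ ∫ x in Set.Ioo (0:ℝ) 1, ∫ y in Set.Ioo (0:ℝ) 1, ((F x y)^2)^2 :=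
    setIntegral_nonneg measurableSet_Ioo fun x _ =>
      setIntegral_nonneg measurableSet_Ioo fun y _ => sq_nonneg _
  -- rewrite the statement quantities
  have contDx2p : Continuous fun p : ℝ × ℝ => ∫ z in Set.Ioo (-h) (0:ℝ), (dX ψ p.1 p.2 z)^2 :=
    param_cont (fun (p : ℝ × ℝ) z => (dX ψ p.1 p.2 z)^2) (by exact (cdx.comp reassoc).pow 2) (-h) 0 hIz
  have contDy2p : Continuous fun p : ℝ × ℝ => ∫ z in Set.Ioo (-h) (0:ℝ), (dY ψ p.1 p.2 z)^2 :=
    param_cont (fun (p : ℝ × ℝ) z => (dY ψ p.1 p.2 z)^2) (by exact (cdy.comp reassoc).pow 2) (-h) 0 hIz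
  have eAdd : (iInt h fun x y z => dX ψ x y z ^ 2 + dY ψ x y z ^ 2) = Dx + Dy := by
    unfold iInt
    have ez : ∀ x y : ℝ, ∫ z in Set.Ioo (-h) (0:ℝ), (dX ψ x y z ^ 2 + dY ψ x y z ^ 2)
        = (∫ z in Set.Ioo (-h) (0:ℝ), dX ψ x y z ^ 2)
          + ∫ z in Set.Ioo (-h) (0:ℝ), dY ψ x y z ^ 2 := fun x y =>
      MeasureTheory.integral_add
        (contIntegrableOn (by exact (cdx.comp (continuous_const.prodMk (continuous_const.prodMk continuous_id))).pow 2) (-h) 0)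
        (contIntegrableOn (by exact (cdy.comp (continuous_const.prodMk (continuous_const.prodMk continuous_id))).pow 2) (-h) 0)
    simp only [ez]
    have ey : ∀ x : ℝ, ∫ y in Set.Ioo (0:ℝ) 1,
        ((∫ z in Set.Ioo (-h) (0:ℝ), dX ψ x y z ^ 2)
          + ∫ z in Set.Ioo (-h) (0:ℝ), dY ψ x y z ^ 2)
        = (∫ y in Set.Ioo (0:ℝ) 1, ∫ z in Set.Ioo (-h) (0:ℝ), dX ψ x y z ^ 2)
          + ∫ y in Set.Ioo (0:ℝ) 1, ∫ z in Set.Ioo (-h) (0:ℝ), dY ψ x y z ^ 2 := fun x =>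
      MeasureTheory.integral_add
        (contIntegrableOn (by exact contDx2p.comp (Continuous.prodMk_right x)) 0 1)
        (contIntegrableOn (by exact contDy2p.comp (Continuous.prodMk_right x)) 0 1)
    simp only [ey]
    rw [MeasureTheory.integral_add
      (contIntegrableOn (param_cont _ (by exact contDx2p) 0 1 zero_le_one) 0 1)
      (contIntegrableOn (param_cont _ (by exact contDy2p) 0 1 zero_le_one) 0 1)]
  have eL2n : L2n h ψ = Real.sqrt L := by
    unfold L2n iInt
    rw [← hLd, ← Real.sqrt_eq_rpow]
  have eK6 : (iInt h fun x y z => |ψ x y z| ^ (6:ℝ)) = K := by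
    unfold iInt
    have e : ∀ r : ℝ, |r| ^ (6:ℝ) = |r| ^ (6:ℕ) := fun r => by
      rw [show ((6:ℝ)) = ((6:ℕ):ℝ) by norm_num, Real.rpow_natCast]
    simp only [e, hKd]
  have eK34 : (Lqn h 6 ψ) ^ ((3:ℝ)/2) = K ^ ((1:ℝ)/4) := by
    unfold Lqn
    rw [eK6, ← Real.rpow_mul Knn]
    norm_num
  have eK4 : Real.sqrt (Real.sqrt K) = K ^ ((1:ℝ)/4) := by
    rw [show Real.sqrt K = K ^ ((1:ℝ)/2) from Real.sqrt_eq_rpow K, Real.sqrt_eq_rpow,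
      ← Real.rpow_mul Knn]
    norm_num
  have eM : Real.sqrt (4 * ((h * Real.sqrt K) * SS))
      = 2 * Real.sqrt h * (K ^ ((1:ℝ)/4)) * Real.sqrt SS := by
    rw [Real.sqrt_mul (by norm_num : (0:ℝ) ≤ 4), Real.sqrt_mul sqKnn SS,
      Real.sqrt_mul hh.le, show Real.sqrt 4 = 2 from by
        rw [show (4:ℝ) = 2^2 by norm_num, Real.sqrt_sq (by norm_num : (0:ℝ) ≤ 2)], eK4]
    ring
  have eGoalL : ∫ x in Set.Ioo (0:ℝ) 1, ∫ y in Set.Ioo (0:ℝ) 1,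
      (∫ z in Set.Ioo (-h) (0:ℝ), (ψ x y z) ^ 2) ^ 4
      = ∫ x in Set.Ioo (0:ℝ) 1, ∫ y in Set.Ioo (0:ℝ) 1, ((F x y)^2)^2 :=
    setIntegral_congr_fun measurableSet_Ioo fun x _ =>
      setIntegral_congr_fun measurableSet_Ioo fun y _ => by
        show (F x y)^4 = ((F x y)^2)^2
        ring
  rw [eGoalL, eK34, eAdd, eL2n,
    show (Dx + Dy) ^ ((1:ℝ)/2) = Real.sqrt (Dx + Dy) from (Real.sqrt_eq_rpow _).symm,
    ← hSS, show SS ^ ((1:ℝ)/2) = Real.sqrt SS from (Real.sqrt_eq_rpow _).symm]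
  calc (∫ x in Set.Ioo (0:ℝ) 1, ∫ y in Set.Ioo (0:ℝ) 1, ((F x y)^2)^2) ^ ((1:ℝ)/4)
      ≤ ((4 * ((h * Real.sqrt K) * SS)) * (4 * ((h * Real.sqrt K) * SS))) ^ ((1:ℝ)/4) :=
        Real.rpow_le_rpow Pnn core (by norm_num)
    _ = Real.sqrt (4 * ((h * Real.sqrt K) * SS)) := mul_self_rpow_quarter Mnn
    _ = 2 * Real.sqrt h * (K ^ ((1:ℝ)/4)) * Real.sqrt SS := eM
end
end
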